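/- arXiv:1706.10260 — 6 statements merged into one kernel-verified Lean document; each statement's English description precedes it below -/
import Mathlib

section
/- For probability measures P, Q on a measurable space with R(Q||P) < ∞, and a measurable function f whose moment generating function M_P(c; f̃) = E_P[exp(c(f - E_P f))] is finite in a neighborhood of 0, the bias satisfies E_Q[f] - E_P[f] ≤ inf_{c>0} { (1/c) log E_P[exp(c(f - E_P f))] + (1/c) R(Q||P) }. -/
open MeasureTheory ProbabilityTheory Real

/-- Kullback-Leibler divergence R(Q||P) = ∫ log(dQ/dP) dQ (as a real number). -/
noncomputable def klDiv {α : Type*} [MeasurableSpace α] (Q P : Measure α) : ℝ :=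
  ∫ x, Real.log ((Q.rnDeriv P x).toReal) ∂Q

/-- Gibbs variational inequality: ∫ g dQ ≤ log ∫ e^g dP + KL(Q‖P). -/
lemma integral_le_log_integral_exp_add_klDiv
    {α : Type*} [MeasurableSpace α] (P Q : Measure α)
    [IsProbabilityMeasure P] [IsProbabilityMeasure Q]
    (hac : Q ≪ P)
    (hKL : Integrable (fun x => Real.log ((Q.rnDeriv P x).toReal)) Q)
    (g : α → ℝ) (hg : Measurable g)
    (hgQ : Integrable g Q)
    (hge : Integrable (fun x => Real.exp (g x)) P) :
    ∫ x, g x ∂Q ≤ Real.log (∫ x, Real.exp (g x) ∂P) + klDiv Q P := by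
  set r : α → ℝ := fun x => (Q.rnDeriv P x).toReal with hr
  set M : ℝ := ∫ x, Real.exp (g x) ∂P with hM
  have hM0 : 0 < M := integral_exp_pos hge
  set h : α → ℝ := fun x => Real.exp (g x - Real.log M) / r x with hh
  -- a.e. positivity of r w.r.t. Q
  have hrpos : ∀ᵐ x ∂Q, 0 < r x := by
    filter_upwards [Measure.rnDeriv_pos hac, hac.ae_le (Measure.rnDeriv_lt_top Q P)]
      with x hx hx' using ENNReal.toReal_pos hx.ne' hx'.ne
  have hrmeas : Measurable r := (Measure.measurable_rnDeriv Q P).ennreal_toReal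
  have hhmeas : Measurable h := ((hg.sub measurable_const).exp).div hrmeas
  -- the integrand exp(g - log M) is integrable w.r.t. P
  have hexp' : Integrable (fun x => Real.exp (g x - Real.log M)) P := by
    simpa [Real.exp_sub, div_eq_mul_inv] using hge.mul_const (Real.exp (Real.log M))⁻¹
  have hb : ∀ x, r x * h x ≤ Real.exp (g x - Real.log M) := by
    intro x
    by_cases hx : r x = 0
    · simp [hh, hx, (Real.exp_pos _).le]
    · rw [hh]
      rw [mul_div_cancel₀ _ hx]
  have hb' : ∀ x, |r x * h x| ≤ Real.exp (g x - Real.log M) := by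
    intro x
    rw [abs_of_nonneg]
    · exact hb x
    · exact mul_nonneg ENNReal.toReal_nonneg
        (div_nonneg (Real.exp_pos _).le ENNReal.toReal_nonneg)
  have hrh_int : Integrable (fun x => r x * h x) P :=
    Integrable.mono' hexp' ((hrmeas.mul hhmeas).aestronglyMeasurable)
      (Filter.Eventually.of_forall hb')
  -- Integrability of h w.r.t. Q
  have hhQ : Integrable h Q := by
    rw [← Measure.withDensity_rnDeriv_eq Q P hac,
      integrable_withDensity_iff (Measure.measurable_rnDeriv Q P) (Measure.rnDeriv_lt_top Q P)]
    simpa [mul_comm] using hrh_int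
  -- ∫ h dQ ≤ 1
  have hint_h : ∫ x, h x ∂Q ≤ 1 := by
    have e1 : ∫ x, h x ∂Q = ∫ x, (Q.rnDeriv P x).toReal • h x ∂P :=
      (MeasureTheory.integral_rnDeriv_smul hac).symm
    have e2 : ∫ x, Real.exp (g x - Real.log M) ∂P = 1 := by
      simp_rw [Real.exp_sub, Real.exp_log hM0]
      rw [integral_div, div_self hM0.ne']
    rw [e1, ← e2]
    exact integral_mono hrh_int hexp' hb
  -- pointwise inequality
  have hpt : ∀ᵐ x ∂Q, g x - Real.log M - Real.log (r x) ≤ h x - 1 := by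
    filter_upwards [hrpos] with x hx
    have : Real.log (h x) = g x - Real.log M - Real.log (r x) := by
      rw [hh, Real.log_div (Real.exp_ne_zero _) hx.ne', Real.log_exp]
    rw [← this]
    exact Real.log_le_sub_one_of_pos (div_pos (Real.exp_pos _) hx)
  have hlhs : Integrable (fun x => g x - Real.log M - Real.log (r x)) Q :=
    (hgQ.sub (integrable_const _)).sub hKL
  have hmono := integral_mono_ae hlhs (hhQ.sub (integrable_const 1)) hpt
  have h1 : Integrable (fun x => g x - Real.log M) Q := hgQ.sub (integrable_const _)
  have hL : ∫ x, (g x - Real.log M - Real.log (r x)) ∂Q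
      = (∫ x, g x ∂Q) - Real.log M - klDiv Q P := by
    simp only [hr, integral_sub h1 hKL, integral_sub hgQ (integrable_const (Real.log M)),
      integral_const, measure_univ, ENNReal.toReal_one, probReal_univ, smul_eq_mul, one_mul, klDiv]
  have hR : ∫ x, (h x - 1) ∂Q = (∫ x, h x ∂Q) - 1 := by
    simp [integral_sub hhQ (integrable_const 1)]
  simp only [Pi.sub_apply] at hmono
  rw [hL, hR] at hmono
  linarith

/-- upper GO-divergence bound on the model bias. -/
theorem bias_le_goal_oriented_divergence
    {α : Type*} [MeasurableSpace α] (P Q : Measure α)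
    [IsProbabilityMeasure P] [IsProbabilityMeasure Q]
    (hac : Q ≪ P)
    (hKL : Integrable (fun x => Real.log ((Q.rnDeriv P x).toReal)) Q)
    (f : α → ℝ) (hf : Measurable f)
    (hfP : Integrable f P) (hfQ : Integrable f Q)
    (hmgf : ∃ δ > (0:ℝ), ∀ c : ℝ, |c| < δ →
      Integrable (fun x => Real.exp (c * (f x - ∫ y, f y ∂P))) P) :
    (∫ x, f x ∂Q) - (∫ x, f x ∂P) ≤
      sInf {y : ℝ | ∃ c : ℝ, 0 < c ∧
        Integrable (fun x => Real.exp (c * (f x - ∫ y, f y ∂P))) P ∧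
        y = (1/c) * Real.log (∫ x, Real.exp (c * (f x - ∫ y, f y ∂P)) ∂P)
            + (1/c) * klDiv Q P} := by
  set m : ℝ := ∫ y, f y ∂P with hm
  apply le_csInf
  · obtain ⟨δ, hδ, hδi⟩ := hmgf
    refine ⟨_, δ/2, by positivity, hδi (δ/2) ?_, rfl⟩
    rw [abs_of_pos (by positivity)]; linarith
  · rintro b ⟨c, hc, hint, rfl⟩
    have hgQ : Integrable (fun x => c * (f x - m)) Q :=
      (hfQ.sub (integrable_const m)).const_mul c
    have key := integral_le_log_integral_exp_add_klDiv P Q hac hKL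
      (fun x => c * (f x - m)) ((hf.sub measurable_const).const_mul c) hgQ hint
    have e1 : ∫ x, c * (f x - m) ∂Q = c * ((∫ x, f x ∂Q) - m) := by
      rw [integral_const_mul, integral_sub hfQ (integrable_const m)]
      simp [integral_const, measure_univ]
    rw [e1] at key
    rw [one_div, ← mul_add, ← div_eq_inv_mul, le_div_iff₀ hc, mul_comm]
    exact key
end

section
/- Under the same hypotheses, the bias is bounded below: E_Q[f] - E_P[f] ≥ - inf_{c>0} { (1/c) log E_P[exp(-c(f - E_P f))] + (1/c) R(Q||P) }, i.e., -Ξ(Q||P; -f) ≤ E_Q[f] - E_P[f]. -/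
open MeasureTheory ProbabilityTheory Real

/-- Donsker–Varadhan inequality: ∫ g dQ ≤ log ∫ e^g dP + KL(Q‖P). -/
lemma donsker_varadhan_aux {α : Type*} [MeasurableSpace α] (P Q : Measure α)
    [IsProbabilityMeasure P] [IsProbabilityMeasure Q] (hac : Q ≪ P)
    (hKL : Integrable (fun x => Real.log ((Q.rnDeriv P x).toReal)) Q)
    {g : α → ℝ} (hg : Measurable g) (hgQ : Integrable g Q)
    (hexp : Integrable (fun x => Real.exp (g x)) P) :
    ∫ x, g x ∂Q ≤ Real.log (∫ x, Real.exp (g x) ∂P) + klDiv Q P := by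
  set ρ : α → ℝ := fun x => (Q.rnDeriv P x).toReal with hρ
  have hρmeas : Measurable ρ := (Measure.measurable_rnDeriv Q P).ennreal_toReal
  have hρnn : ∀ x, 0 ≤ ρ x := fun x => ENNReal.toReal_nonneg
  have hρpos : ∀ᵐ x ∂Q, 0 < ρ x := by
    filter_upwards [Measure.rnDeriv_pos hac, hac.ae_le (Measure.rnDeriv_lt_top Q P)]
      with x h1 h2
    exact ENNReal.toReal_pos h1.ne' h2.ne
  set Z : ℝ := ∫ x, Real.exp (g x) ∂P with hZdef
  have hZ : 0 < Z := integral_exp_pos hexp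
  set h : α → ℝ := fun x => Real.exp (g x) / ρ x with hh
  have hnn : ∀ x, 0 ≤ ρ x * h x := fun x =>
    mul_nonneg (hρnn x) (div_nonneg (Real.exp_pos _).le (hρnn x))
  have hbound : ∀ x, ρ x * h x ≤ Real.exp (g x) := by
    intro x
    rcases eq_or_ne (ρ x) 0 with h0 | h0
    · simp [hh, h0]; positivity
    · rw [hh]; rw [mul_div_cancel₀ _ h0]
  have hmeas_smul : Measurable (fun x => ρ x * h x) :=
    hρmeas.mul ((hg.exp).div hρmeas)
  have hInt_smul : Integrable (fun x => ρ x * h x) P := by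
    refine hexp.mono' hmeas_smul.aestronglyMeasurable (ae_of_all _ fun x => ?_)
    rw [Real.norm_eq_abs, abs_of_nonneg (hnn x)]
    exact hbound x
  have hhQ : Integrable h Q := by
    rw [← MeasureTheory.integrable_rnDeriv_smul_iff hac]
    simpa [smul_eq_mul] using hInt_smul
  have hZh_eq : ∫ x, h x ∂Q = ∫ x, ρ x * h x ∂P := by
    have := MeasureTheory.integral_rnDeriv_smul (f := h) hac
    simpa [smul_eq_mul] using this.symm
  have hZh_le : ∫ x, h x ∂Q ≤ Z := by
    rw [hZh_eq, hZdef]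
    exact integral_mono hInt_smul hexp hbound
  -- pointwise log inequality
  have hptwise : ∀ᵐ x ∂Q, g x - Real.log (ρ x) ≤ h x / Z + (Real.log Z - 1) := by
    filter_upwards [hρpos] with x hx
    have hhx : 0 < h x := div_pos (Real.exp_pos _) hx
    have h1 : Real.log (h x / Z) ≤ h x / Z - 1 :=
      Real.log_le_sub_one_of_pos (div_pos hhx hZ)
    have h2 : Real.log (h x / Z) = g x - Real.log (ρ x) - Real.log Z := by
      rw [Real.log_div hhx.ne' hZ.ne', hh, Real.log_div (Real.exp_ne_zero _) hx.ne',
        Real.log_exp]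
    linarith
  have hLHSint : Integrable (fun x => g x - Real.log (ρ x)) Q := hgQ.sub hKL
  have hRHSint : Integrable (fun x => h x / Z + (Real.log Z - 1)) Q :=
    (hhQ.div_const Z).add (integrable_const _)
  have hint_le := integral_mono_ae hLHSint hRHSint hptwise
  rw [integral_sub hgQ hKL] at hint_le
  have hRHS : ∫ x, (h x / Z + (Real.log Z - 1)) ∂Q
      = (∫ x, h x ∂Q) / Z + (Real.log Z - 1) := by
    rw [integral_add (hhQ.div_const Z) (integrable_const _), integral_div, integral_const]
    simp
  rw [hRHS] at hint_le
  have hd : (∫ x, h x ∂Q) / Z ≤ 1 := (div_le_one hZ).mpr hZh_le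
  have : ∫ x, g x ∂Q - klDiv Q P ≤ Real.log Z := by
    have := hint_le
    simp only [klDiv]
    linarith
  linarith [this]

/-- lower GO-divergence bound on the model bias. -/
theorem bias_ge_neg_goal_oriented_divergence
    {α : Type*} [MeasurableSpace α] (P Q : Measure α)
    [IsProbabilityMeasure P] [IsProbabilityMeasure Q]
    (hac : Q ≪ P)
    (hKL : Integrable (fun x => Real.log ((Q.rnDeriv P x).toReal)) Q)
    (f : α → ℝ) (hf : Measurable f)
    (hfP : Integrable f P) (hfQ : Integrable f Q)
    (hmgf : ∃ δ > (0:ℝ), ∀ c : ℝ, |c| < δ →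
      Integrable (fun x => Real.exp (c * (f x - ∫ y, f y ∂P))) P) :
    - sInf {y : ℝ | ∃ c : ℝ, 0 < c ∧
        Integrable (fun x => Real.exp (-c * (f x - ∫ y, f y ∂P))) P ∧
        y = (1/c) * Real.log (∫ x, Real.exp (-c * (f x - ∫ y, f y ∂P)) ∂P)
            + (1/c) * klDiv Q P} ≤
      (∫ x, f x ∂Q) - (∫ x, f x ∂P) := by
  set m : ℝ := ∫ y, f y ∂P with hm
  set S := {y : ℝ | ∃ c : ℝ, 0 < c ∧
      Integrable (fun x => Real.exp (-c * (f x - m))) P ∧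
      y = (1/c) * Real.log (∫ x, Real.exp (-c * (f x - m)) ∂P)
          + (1/c) * klDiv Q P} with hS
  have hne : S.Nonempty := by
    obtain ⟨δ, hδ, hδint⟩ := hmgf
    have hint : Integrable (fun x => Real.exp (-(δ/2) * (f x - m))) P := by
      apply hδint
      rw [abs_neg, abs_of_pos (by linarith)]
      linarith
    exact ⟨_, δ/2, by linarith, hint, rfl⟩
  rw [neg_le]
  apply le_csInf hne
  rintro y ⟨c, hc, hint, rfl⟩
  set t : ℝ := ∫ x, f x ∂Q - m with ht
  have hgQ : Integrable (fun x => -c * (f x - m)) Q :=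
    (hfQ.sub (integrable_const m)).const_mul (-c)
  have hgmeas : Measurable (fun x => -c * (f x - m)) :=
    (hf.sub measurable_const).const_mul (-c)
  have hDV := donsker_varadhan_aux P Q hac hKL hgmeas hgQ hint
  have hIQ : ∫ x, -c * (f x - m) ∂Q = -c * t := by
    rw [integral_const_mul, integral_sub hfQ (integrable_const m), integral_const]
    simp [ht]
  rw [hIQ] at hDV
  have hcp : (0:ℝ) < 1/c := by positivity
  calc -t = (1/c) * (-c * t) := by field_simp
    _ ≤ (1/c) * (Real.log (∫ x, Real.exp (-c * (f x - m)) ∂P) + klDiv Q P) :=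
        mul_le_mul_of_nonneg_left hDV hcp.le
    _ = (1/c) * Real.log (∫ x, Real.exp (-c * (f x - m)) ∂P) + (1/c) * klDiv Q P := by ring
end

section
/- (Scaling-free statistical estimator bound) Let X₁,…,Xₙ be i.i.d. with law P and ψ satisfy bounded differences with d_k ≤ C/n for all k. Then for any probability Q on the single-variable space, |E_{Pⁿ}[ψ(X₁,…,Xₙ)] - E_{Qⁿ}[ψ(X₁,…,Xₙ)]| ≤ C √(2 R(Q||P)), uniformly in n. -/
open MeasureTheory ProbabilityTheory Real

open Set

section Aux
set_option linter.unusedSectionVars false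

lemma sigma_deriv {t : ℝ} (ht : 0 < t) :
    HasDerivAt (fun t : ℝ => (t+1) * Real.log t - 2*(t-1)) (Real.log t + 1/t - 1) t := by
  have h1 : HasDerivAt (fun t : ℝ => (t+1) * Real.log t) (1 * Real.log t + (t+1) * t⁻¹) t :=
    ((hasDerivAt_id t).add_const 1).mul (Real.hasDerivAt_log ht.ne')
  have h2 : HasDerivAt (fun t : ℝ => 2*(t-1)) 2 t := by
    simpa using ((hasDerivAt_id t).sub_const 1).const_mul 2
  refine (h1.sub h2).congr_deriv ?_
  rw [add_mul, mul_inv_cancel₀ ht.ne']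
  ring

lemma sigma_mono : MonotoneOn (fun t : ℝ => (t+1) * Real.log t - 2*(t-1)) (Ioi 0) := by
  have hderiv : ∀ x ∈ interior (Ioi (0:ℝ)), 0 ≤ deriv (fun t : ℝ => (t+1) * Real.log t - 2*(t-1)) x := by
    intro x hx
    rw [interior_Ioi] at hx
    rw [(sigma_deriv hx).deriv]
    have hlog : 1 - 1/x ≤ Real.log x := by
      have := Real.log_le_sub_one_of_pos (x := 1/x) (by rw [one_div]; exact inv_pos.mpr hx)
      rw [Real.log_div one_ne_zero (ne_of_gt hx), Real.log_one] at this
      linarith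
    linarith
  exact monotoneOn_of_deriv_nonneg (convex_Ioi 0)
    (fun x hx => ((sigma_deriv hx).continuousAt).continuousWithinAt)
    (fun x hx => ((sigma_deriv (by rw [interior_Ioi] at hx; exact hx)).differentiableAt).differentiableWithinAt)
    hderiv

lemma rho_deriv {t : ℝ} (ht : 0 < t) :
    HasDerivAt (fun t : ℝ => (2*t+4) * (t * Real.log t - t + 1) - 3*(t-1)^2)
      (4 * ((t+1) * Real.log t - 2*(t-1))) t := by
  have hl : HasDerivAt (fun t : ℝ => t * Real.log t - t + 1)
      (1 * Real.log t + t * t⁻¹ - 1) t :=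
    (((hasDerivAt_id t).mul (Real.hasDerivAt_log ht.ne')).sub (hasDerivAt_id t)).add_const 1
  have h1 : HasDerivAt (fun t : ℝ => (2*t+4) * (t * Real.log t - t + 1))
      (2 * (t * Real.log t - t + 1) + (2*t+4) * (1 * Real.log t + t * t⁻¹ - 1)) t := by
    have := ((((hasDerivAt_id t).const_mul 2).add_const 4).mul hl)
    exact this.congr_deriv (by simp)
  have h2 : HasDerivAt (fun t : ℝ => 3*(t-1)^2) (3*(2*(t-1))) t := by
    simpa using (((hasDerivAt_id t).sub_const 1).pow 2).const_mul 3
  refine (h1.sub h2).congr_deriv ?_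
  rw [mul_inv_cancel₀ ht.ne']
  ring

lemma pinsker_pointwise {t : ℝ} (ht : 0 ≤ t) :
    3*(t-1)^2 ≤ (2*t+4) * (t * Real.log t - t + 1) := by
  rcases eq_or_lt_of_le ht with h | h
  · simp [← h]; norm_num
  have hρ1 : (2*(1:ℝ)+4) * (1 * Real.log 1 - 1 + 1) - 3*((1:ℝ)-1)^2 = 0 := by simp
  have key : 0 ≤ (2*t+4) * (t * Real.log t - t + 1) - 3*(t-1)^2 := by
    rcases le_or_gt 1 t with h1 | h1
    · have mono : MonotoneOn (fun t : ℝ => (2*t+4) * (t * Real.log t - t + 1) - 3*(t-1)^2) (Ici 1) := by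
        refine monotoneOn_of_deriv_nonneg (convex_Ici 1)
          (fun x hx => ((rho_deriv (lt_of_lt_of_le one_pos hx)).continuousAt).continuousWithinAt)
          (fun x hx => ((rho_deriv (by rw [interior_Ici] at hx; exact lt_trans one_pos hx)).differentiableAt).differentiableWithinAt)
          ?_
        intro x hx
        rw [interior_Ici] at hx
        rw [(rho_deriv (lt_trans one_pos hx)).deriv]
        have := sigma_mono (mem_Ioi.mpr one_pos) (mem_Ioi.mpr (lt_trans one_pos hx)) hx.le
        simp only [Real.log_one] at this
        nlinarith [this]
      have := mono (self_mem_Ici) (mem_Ici.mpr h1) h1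
      simp only [Real.log_one] at this hρ1 ⊢
      nlinarith [this]
    · have anti : AntitoneOn (fun t : ℝ => (2*t+4) * (t * Real.log t - t + 1) - 3*(t-1)^2) (Ioc 0 1) := by
        refine antitoneOn_of_deriv_nonpos (convex_Ioc 0 1)
          (fun x hx => ((rho_deriv hx.1).continuousAt).continuousWithinAt)
          (fun x hx => ((rho_deriv (by rw [interior_Ioc] at hx; exact hx.1)).differentiableAt).differentiableWithinAt)
          ?_
        intro x hx
        rw [interior_Ioc] at hx
        rw [(rho_deriv hx.1).deriv]
        have := sigma_mono (mem_Ioi.mpr hx.1) (mem_Ioi.mpr one_pos) hx.2.le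
        simp only [Real.log_one] at this
        nlinarith [this]
      have := anti (mem_Ioc.mpr ⟨h, h1.le⟩) (mem_Ioc.mpr ⟨one_pos, le_refl 1⟩) h1.le
      simp only [Real.log_one] at this
      nlinarith [this]
  linarith

variable {X : Type*} [MeasurableSpace X]

lemma integrable_of_bdd {μ : Measure X} [IsFiniteMeasure μ] {f : X → ℝ}
    (hf : Measurable f) {B : ℝ} (hB : ∀ x, |f x| ≤ B) : Integrable f μ :=
  (integrable_const B).mono' hf.aestronglyMeasurable
    (ae_of_all _ fun x => by rw [Real.norm_eq_abs]; exact hB x)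

/-- change of measure oscillation bound -/
lemma osc_bound (P Q : Measure X) [IsProbabilityMeasure P] [IsProbabilityMeasure Q]
    (hac : Q ≪ P) (f : X → ℝ) (hf : Measurable f) (d : ℝ)
    (hosc : ∀ y y', |f y - f y'| ≤ d) :
    |(∫ y, f y ∂P) - (∫ y, f y ∂Q)| ≤ d * ∫ x, |(Q.rnDeriv P x).toReal - 1| ∂P := by
  have hne : Nonempty X := by
    by_contra h
    have h0 : (Set.univ : Set X) = ∅ := Set.univ_eq_empty_iff.mpr (not_nonempty_iff.mp h)
    have := measure_univ (μ := P)
    rw [h0] at this; simp at this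
  obtain ⟨y₀⟩ := hne
  set g : X → ℝ := fun x => (Q.rnDeriv P x).toReal with hgdef
  have hg_meas : Measurable g := (Measure.measurable_rnDeriv Q P).ennreal_toReal
  have hg_int : Integrable g P := Measure.integrable_toReal_rnDeriv
  have hg_one : ∫ x, g x ∂P = 1 := by
    rw [hgdef, Measure.integral_toReal_rnDeriv hac]; simp
  set c := f y₀ with hc
  have hfB : ∀ x, |f x| ≤ |c| + d := by
    intro x
    have := hosc x y₀
    calc |f x| = |(f x - c) + c| := by ring_nf
      _ ≤ |f x - c| + |c| := abs_add_le _ _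
      _ ≤ |c| + d := by rw [add_comm]; exact add_le_add le_rfl this
  have hfP : Integrable f P := integrable_of_bdd hf hfB
  have hfQ : Integrable f Q := integrable_of_bdd hf hfB
  have hgf_int : Integrable (fun x => g x * f x) P := by
    have := (integrable_rnDeriv_smul_iff (μ := Q) (ν := P) hac (f := f)).mpr hfQ
    simpa [smul_eq_mul] using this
  have hQint : ∫ y, f y ∂Q = ∫ x, g x * f x ∂P := by
    rw [← integral_rnDeriv_smul hac (f := f)]; simp [smul_eq_mul]; rfl
  have hprod_int : Integrable (fun x => (f x - c) * (g x - 1)) P := by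
    have hb : Integrable (fun x => d * |g x - 1|) P :=
      ((hg_int.sub (integrable_const 1)).abs.const_mul d)
    refine hb.mono' ((((hf.sub measurable_const)).mul
      (hg_meas.sub measurable_const)).aestronglyMeasurable) (ae_of_all _ fun x => ?_)
    rw [Real.norm_eq_abs, abs_mul]
    have h1 : |f x - c| ≤ d := hosc x y₀
    have := abs_nonneg (g x - 1)
    exact mul_le_mul_of_nonneg_right h1 this
  have key : (∫ y, f y ∂P) - (∫ y, f y ∂Q) = - ∫ x, (f x - c) * (g x - 1) ∂P := by
    have expand : ∀ x, (f x - c) * (g x - 1) = (g x * f x) - f x - c * g x + c := by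
      intro x; ring
    have : ∫ x, (f x - c) * (g x - 1) ∂P
        = (∫ x, g x * f x ∂P) - (∫ x, f x ∂P) - c * (∫ x, g x ∂P) + c := by
      rw [integral_congr_ae (ae_of_all _ expand)]
      have hcg : Integrable (fun x => c * g x) P := hg_int.const_mul c
      have hA : Integrable (fun x => g x * f x - f x) P := hgf_int.sub hfP
      have hB : Integrable (fun x => g x * f x - f x - c * g x) P := hA.sub hcg
      rw [integral_add hB (integrable_const c), integral_sub hA hcg, integral_sub hgf_int hfP]
      have : ∫ x, c * g x ∂P = c * ∫ x, g x ∂P := by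
        simpa [smul_eq_mul] using integral_smul c g
      rw [this]
      simp
    rw [this, hg_one, hQint]
    ring
  rw [key, abs_neg]
  calc |∫ x, (f x - c) * (g x - 1) ∂P| ≤ ∫ x, |(f x - c) * (g x - 1)| ∂P := by
        simpa [Real.norm_eq_abs, abs_mul] using
          norm_integral_le_integral_norm (fun x => (f x - c) * (g x - 1)) (μ := P)
    _ ≤ ∫ x, d * |g x - 1| ∂P := by
        simp only [abs_mul]
        refine integral_mono (by simpa [abs_mul] using hprod_int.abs)
          ((hg_int.sub (integrable_const 1)).abs.const_mul d) fun x => ?_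
        exact mul_le_mul_of_nonneg_right (hosc x y₀) (abs_nonneg _)
    _ = d * ∫ x, |g x - 1| ∂P := by
        simpa [smul_eq_mul] using integral_smul d (fun x => |g x - 1|)

lemma measurable_cons_pair {n : ℕ} :
    Measurable (fun p : X × (Fin n → X) => Fin.cons p.1 p.2 : X × (Fin n → X) → Fin (n+1) → X) := by
  refine measurable_pi_iff.mpr fun i => ?_
  refine Fin.cases ?_ (fun j => ?_) i
  · simpa using measurable_fst
  · simpa [Function.comp_def] using (measurable_pi_apply j).comp measurable_snd

/-- integral over i.i.d. product splits off coordinate 0 -/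
lemma integral_pi_succ (μ : Measure X) [IsProbabilityMeasure μ] {n : ℕ}
    (ψ : (Fin (n+1) → X) → ℝ) (hψ : Measurable ψ) {B : ℝ} (hB : ∀ x, |ψ x| ≤ B) :
    ∫ x, ψ x ∂(Measure.pi fun _ : Fin (n+1) => μ)
      = ∫ y, ∫ x, ψ (Fin.cons y x) ∂(Measure.pi fun _ : Fin n => μ) ∂μ := by
  have hmp := measurePreserving_piFinSuccAbove (fun _ : Fin (n+1) => μ) 0
  set e := MeasurableEquiv.piFinSuccAbove (fun _ : Fin (n+1) => X) 0 with he
  have h1 : ∫ x, ψ x ∂(Measure.pi fun _ : Fin (n+1) => μ)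
      = ∫ p, ψ (e.symm p) ∂(μ.prod (Measure.pi fun _ : Fin n => μ)) := by
    rw [← hmp.map_eq, integral_map (f := fun p => ψ (e.symm p)) e.measurable.aemeasurable
      (hψ.comp e.symm.measurable).aestronglyMeasurable]
    simp
  rw [h1]
  rw [integral_prod]
  · congr 1
    funext y
    congr 1
    funext x
    congr 1
    show (Fin.insertNthEquiv (fun _ : Fin (n+1) => X) 0) (y, x) = Fin.cons y x
    simp [Fin.insertNthEquiv, Fin.insertNth_zero']
  · exact integrable_of_bdd (μ := μ.prod (Measure.pi fun _ : Fin n => μ))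
      (hψ.comp e.symm.measurable) (fun p => hB _)

lemma bdd_of_bddDiff : ∀ {n : ℕ} (ψ : (Fin n → X) → ℝ) (d : ℝ),
    (∀ (x : Fin n → X) (k : Fin n) (y : X), |ψ x - ψ (Function.update x k y)| ≤ d) →
    ∀ x y, |ψ x - ψ y| ≤ n * d := by
  intro n
  induction n with
  | zero =>
    intro ψ d _ x y
    have : x = y := funext fun i => i.elim0
    simp [this]
  | succ n ih =>
    intro ψ d hbd x y
    have h0 : |ψ x - ψ (Function.update x 0 (y 0))| ≤ d := hbd x 0 (y 0)
    set φ : (Fin n → X) → ℝ := fun z => ψ (Fin.cons (y 0) z) with hφ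
    have hφbd : ∀ (z : Fin n → X) (k : Fin n) (w : X), |φ z - φ (Function.update z k w)| ≤ d := by
      intro z k w
      have h : Fin.cons (α := fun _ : Fin (n+1) => X) (y 0) (Function.update z k w)
          = Function.update (Fin.cons (y 0) z) k.succ w :=
        Fin.cons_update (α := fun _ : Fin (n+1) => X) (y 0) z k w
      rw [hφ]
      simp only [h]
      exact hbd _ k.succ w
    have key := ih φ d hφbd (Fin.tail x) (Fin.tail y)
    have e1 : φ (Fin.tail y) = ψ y := by rw [hφ]; simp [Fin.cons_self_tail]
    have e2 : φ (Fin.tail x) = ψ (Function.update x 0 (y 0)) := by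
      show ψ (Fin.cons (y 0) (Fin.tail x)) = ψ (Function.update x 0 (y 0))
      congr 1
      funext i
      refine Fin.cases ?_ (fun j => ?_) i
      · simp
      · simp [Fin.succ_ne_zero, Fin.tail]
    rw [e1, e2] at key
    have : |ψ x - ψ y| ≤ |ψ x - ψ (Function.update x 0 (y 0))|
        + |ψ (Function.update x 0 (y 0)) - ψ y| := abs_sub_le _ _ _
    push_cast
    linarith


lemma main_induction (P Q : Measure X) [IsProbabilityMeasure P] [IsProbabilityMeasure Q]
    (hac : Q ≪ P) :
    ∀ (n : ℕ) (ψ : (Fin n → X) → ℝ), Measurable ψ → ∀ (d : ℝ),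
    (∀ (x : Fin n → X) (k : Fin n) (y : X), |ψ x - ψ (Function.update x k y)| ≤ d) →
    |(∫ x, ψ x ∂(Measure.pi fun _ : Fin n => P))
      - (∫ x, ψ x ∂(Measure.pi fun _ : Fin n => Q))|
      ≤ n * d * ∫ x, |(Q.rnDeriv P x).toReal - 1| ∂P := by
  intro n
  induction n with
  | zero =>
    intro ψ hψ d hbd
    rw [Measure.pi_of_empty (fun _ : Fin 0 => P), Measure.pi_of_empty (fun _ : Fin 0 => Q)]
    rw [integral_dirac' ψ _ hψ.stronglyMeasurable]
    simp
  | succ n ih =>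
    intro ψ hψ d hbd
    have hd : 0 ≤ d := by
      have hne : Nonempty X := by
        by_contra h
        have h0 : (Set.univ : Set X) = ∅ := Set.univ_eq_empty_iff.mpr (not_nonempty_iff.mp h)
        have := measure_univ (μ := P)
        rw [h0] at this; simp at this
      obtain ⟨x₀⟩ := hne
      have := hbd (fun _ => x₀) 0 x₀
      simpa [Function.update_eq_self] using (abs_nonneg _).trans this
    have hε : 0 ≤ ∫ x, |(Q.rnDeriv P x).toReal - 1| ∂P := integral_nonneg fun x => abs_nonneg _
    -- global bound on ψ
    have hne : Nonempty X := by
      by_contra h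
      have h0 : (Set.univ : Set X) = ∅ := Set.univ_eq_empty_iff.mpr (not_nonempty_iff.mp h)
      have := measure_univ (μ := P)
      rw [h0] at this; simp at this
    obtain ⟨x₀⟩ := hne
    set z₀ : Fin (n+1) → X := fun _ => x₀ with hz₀
    have hψB : ∀ x, |ψ x| ≤ |ψ z₀| + (n+1) * d := by
      intro x
      have := bdd_of_bddDiff ψ d hbd x z₀
      calc |ψ x| = |(ψ x - ψ z₀) + ψ z₀| := by ring_nf
        _ ≤ |ψ x - ψ z₀| + |ψ z₀| := abs_add_le _ _
        _ ≤ |ψ z₀| + (n+1) * d := by push_cast at this ⊢; linarith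
    set B := |ψ z₀| + (n+1) * d with hB
    -- sections are measurable, bounded, with bounded differences
    have hsec_meas : ∀ y : X, Measurable (fun x : Fin n → X => ψ (Fin.cons y x)) := by
      intro y
      exact hψ.comp (measurable_cons_pair.comp (measurable_prodMk_left (x := y)))
    have hsec_bd : ∀ (y : X) (x : Fin n → X) (k : Fin n) (w : X),
        |ψ (Fin.cons y x) - ψ (Fin.cons y (Function.update x k w))| ≤ d := by
      intro y x k w
      rw [show Fin.cons (α := fun _ : Fin (n+1) => X) y (Function.update x k w)
        = Function.update (Fin.cons y x) k.succ w from
        Fin.cons_update (α := fun _ : Fin (n+1) => X) y x k w]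
      exact hbd _ k.succ w
    -- inner integral functions
    set FP : X → ℝ := fun y => ∫ x, ψ (Fin.cons y x) ∂(Measure.pi fun _ : Fin n => P) with hFP
    set FQ : X → ℝ := fun y => ∫ x, ψ (Fin.cons y x) ∂(Measure.pi fun _ : Fin n => Q) with hFQ
    have hFP_meas : Measurable FP := by
      apply StronglyMeasurable.measurable
      apply StronglyMeasurable.integral_prod_right'
        (f := fun p : X × (Fin n → X) => ψ (Fin.cons p.1 p.2))
      exact (hψ.comp measurable_cons_pair).stronglyMeasurable
    have hFQ_meas : Measurable FQ := by
      apply StronglyMeasurable.measurable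
      apply StronglyMeasurable.integral_prod_right'
        (f := fun p : X × (Fin n → X) => ψ (Fin.cons p.1 p.2))
      exact (hψ.comp measurable_cons_pair).stronglyMeasurable
    have hFP_bdd : ∀ y, |FP y| ≤ B := by
      intro y
      rw [hFP]
      calc |∫ x, ψ (Fin.cons y x) ∂(Measure.pi fun _ : Fin n => P)|
          ≤ ∫ x, |ψ (Fin.cons y x)| ∂(Measure.pi fun _ : Fin n => P) := by
            simpa [Real.norm_eq_abs] using
              norm_integral_le_integral_norm (fun x => ψ (Fin.cons y x))
                (μ := Measure.pi fun _ : Fin n => P)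
        _ ≤ ∫ _x, B ∂(Measure.pi fun _ : Fin n => P) := by
            refine integral_mono (integrable_of_bdd (hsec_meas y) (fun x => hψB _)).abs
              (integrable_const B) fun x => hψB _
        _ = B := by simp
    have hFQ_bdd : ∀ y, |FQ y| ≤ B := by
      intro y
      rw [hFQ]
      calc |∫ x, ψ (Fin.cons y x) ∂(Measure.pi fun _ : Fin n => Q)|
          ≤ ∫ x, |ψ (Fin.cons y x)| ∂(Measure.pi fun _ : Fin n => Q) := by
            simpa [Real.norm_eq_abs] using
              norm_integral_le_integral_norm (fun x => ψ (Fin.cons y x))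
                (μ := Measure.pi fun _ : Fin n => Q)
        _ ≤ ∫ _x, B ∂(Measure.pi fun _ : Fin n => Q) := by
            refine integral_mono (integrable_of_bdd (hsec_meas y) (fun x => hψB _)).abs
              (integrable_const B) fun x => hψB _
        _ = B := by simp
    -- oscillation of FP
    have hFP_osc : ∀ y y', |FP y - FP y'| ≤ d := by
      intro y y'
      rw [hFP]
      have hint : ∀ w : X, Integrable (fun x : Fin n → X => ψ (Fin.cons w x))
          (Measure.pi fun _ : Fin n => P) := fun w =>
        integrable_of_bdd (hsec_meas w) (fun x => hψB _)
      rw [← integral_sub (hint y) (hint y')]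
      calc |∫ x, (ψ (Fin.cons y x) - ψ (Fin.cons y' x)) ∂(Measure.pi fun _ : Fin n => P)|
          ≤ ∫ x, |ψ (Fin.cons y x) - ψ (Fin.cons y' x)| ∂(Measure.pi fun _ : Fin n => P) := by
            simpa [Real.norm_eq_abs] using
              norm_integral_le_integral_norm
                (fun x => ψ (Fin.cons y x) - ψ (Fin.cons y' x))
                (μ := Measure.pi fun _ : Fin n => P)
        _ ≤ ∫ _x, d ∂(Measure.pi fun _ : Fin n => P) := by
            refine integral_mono ((hint y).sub (hint y')).abs (integrable_const d) fun x => ?_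
            have hupd : Function.update (Fin.cons (α := fun _ : Fin (n+1) => X) y' x) 0 y
                = Fin.cons y x :=
              Fin.update_cons_zero (α := fun _ : Fin (n+1) => X) y' x y
            rw [← hupd, abs_sub_comm]
            exact hbd _ 0 y
        _ = d := by simp
    -- pointwise IH bound
    have hIH : ∀ y, |FP y - FQ y| ≤ n * d * ∫ x, |(Q.rnDeriv P x).toReal - 1| ∂P := by
      intro y
      exact ih (fun x => ψ (Fin.cons y x)) (hsec_meas y) d (hsec_bd y)
    -- decompose
    rw [integral_pi_succ P ψ hψ hψB, integral_pi_succ Q ψ hψ hψB]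
    have step1 : |(∫ y, FP y ∂P) - (∫ y, FP y ∂Q)|
        ≤ d * ∫ x, |(Q.rnDeriv P x).toReal - 1| ∂P :=
      osc_bound P Q hac FP hFP_meas d hFP_osc
    have step2 : |(∫ y, FP y ∂Q) - (∫ y, FQ y ∂Q)|
        ≤ n * d * ∫ x, |(Q.rnDeriv P x).toReal - 1| ∂P := by
      rw [← integral_sub (integrable_of_bdd hFP_meas hFP_bdd)
        (integrable_of_bdd hFQ_meas hFQ_bdd)]
      calc |∫ y, (FP y - FQ y) ∂Q| ≤ ∫ y, |FP y - FQ y| ∂Q := by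
            simpa [Real.norm_eq_abs] using
              norm_integral_le_integral_norm (fun y => FP y - FQ y) (μ := Q)
        _ ≤ ∫ _y, n * d * ∫ x, |(Q.rnDeriv P x).toReal - 1| ∂P ∂Q := by
            refine integral_mono ((integrable_of_bdd hFP_meas hFP_bdd).sub
              (integrable_of_bdd hFQ_meas hFQ_bdd)).abs (integrable_const _) fun y => hIH y
        _ = n * d * ∫ x, |(Q.rnDeriv P x).toReal - 1| ∂P := by simp
    calc |(∫ y, FP y ∂P) - (∫ y, FQ y ∂Q)|
        ≤ |(∫ y, FP y ∂P) - (∫ y, FP y ∂Q)| + |(∫ y, FP y ∂Q) - (∫ y, FQ y ∂Q)| :=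
          abs_sub_le _ _ _
      _ ≤ d * (∫ x, |(Q.rnDeriv P x).toReal - 1| ∂P)
          + n * d * ∫ x, |(Q.rnDeriv P x).toReal - 1| ∂P := add_le_add step1 step2
      _ = (n+1) * d * ∫ x, |(Q.rnDeriv P x).toReal - 1| ∂P := by ring
      _ = (↑(n+1)) * d * ∫ x, |(Q.rnDeriv P x).toReal - 1| ∂P := by push_cast; ring

lemma pinsker_l1 (P Q : Measure X) [IsProbabilityMeasure P] [IsProbabilityMeasure Q]
    (hac : Q ≪ P)
    (hKL : Integrable (fun x => Real.log ((Q.rnDeriv P x).toReal)) Q) :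
    ∫ x, |(Q.rnDeriv P x).toReal - 1| ∂P ≤ Real.sqrt (2 * klDiv Q P) := by
  set g : X → ℝ := fun x => (Q.rnDeriv P x).toReal with hg
  have hg_meas : Measurable g := (Measure.measurable_rnDeriv Q P).ennreal_toReal
  have hg_nonneg : ∀ x, 0 ≤ g x := fun x => ENNReal.toReal_nonneg
  have hg_int : Integrable g P := Measure.integrable_toReal_rnDeriv
  have hg_one : ∫ x, g x ∂P = 1 := by
    rw [hg, Measure.integral_toReal_rnDeriv hac]; simp
  have hGlogG : Integrable (fun x => g x * Real.log (g x)) P := by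
    have := (integrable_rnDeriv_smul_iff (μ := Q) (ν := P) hac
      (f := fun x => Real.log (g x))).mpr hKL
    simpa [smul_eq_mul] using this
  have hKL_eq : klDiv Q P = ∫ x, g x * Real.log (g x) ∂P := by
    rw [klDiv, ← integral_rnDeriv_smul hac (f := fun x => Real.log (g x))]
    simp [smul_eq_mul]; rfl
  set k : X → ℝ := fun x => g x * Real.log (g x) - g x + 1 with hk
  have hk_int : Integrable k P := (hGlogG.sub hg_int).add (integrable_const 1)
  have hk_key : ∀ x, 3*(g x - 1)^2 ≤ (2 * g x + 4) * k x := fun x =>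
    pinsker_pointwise (hg_nonneg x)
  have hk_nonneg : ∀ x, 0 ≤ k x := by
    intro x
    nlinarith [hk_key x, hg_nonneg x, sq_nonneg (g x - 1)]
  have h1int : Integrable (fun x => g x * Real.log (g x) - g x) P := hGlogG.sub hg_int
  have hk_integral : ∫ x, k x ∂P = klDiv Q P := by
    rw [hKL_eq]
    calc ∫ x, k x ∂P = ∫ x, ((g x * Real.log (g x) - g x) + 1) ∂P := rfl
      _ = (∫ x, (g x * Real.log (g x) - g x) ∂P) + ∫ x, (1:ℝ) ∂P :=
          integral_add h1int (integrable_const 1)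
      _ = ∫ x, g x * Real.log (g x) ∂P := by
          rw [integral_sub hGlogG hg_int, hg_one]; simp
  have hKL_nonneg : 0 ≤ klDiv Q P := by
    rw [← hk_integral]
    exact integral_nonneg hk_nonneg
  -- Cauchy-Schwarz setup
  set u : X → ℝ := fun x => |g x - 1| * Real.sqrt (3 / (2 * g x + 4)) with hu
  set v : X → ℝ := fun x => Real.sqrt ((2 * g x + 4) / 3) with hv
  have hpos : ∀ x, (0:ℝ) < 2 * g x + 4 := fun x => by nlinarith [hg_nonneg x]
  have huv : ∀ x, u x * v x = |g x - 1| := by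
    intro x
    rw [hu, hv]
    have : Real.sqrt (3 / (2 * g x + 4)) * Real.sqrt ((2 * g x + 4) / 3)
        = Real.sqrt ((3 / (2 * g x + 4)) * ((2 * g x + 4) / 3)) :=
      (Real.sqrt_mul (by positivity) _).symm
    rw [mul_assoc, this, show (3 / (2 * g x + 4)) * ((2 * g x + 4) / 3) = 1 by
      field_simp; exact div_self (hpos x).ne', Real.sqrt_one, mul_one]
  have hu_nonneg : ∀ x, 0 ≤ u x := fun x => by positivity
  have hv_nonneg : ∀ x, 0 ≤ v x := fun x => by positivity
  have hu_sq : ∀ x, u x ^ 2 ≤ k x := by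
    intro x
    rw [hu, mul_pow, sq_abs, Real.sq_sqrt (by positivity)]
    calc (g x - 1)^2 * (3/(2 * g x + 4)) = 3*(g x - 1)^2 / (2 * g x + 4) := by ring
      _ ≤ k x := (div_le_iff₀ (hpos x)).mpr (by nlinarith [hk_key x])
  have hv_sq : ∀ x, v x ^ 2 = (2 * g x + 4) / 3 := fun x =>
    Real.sq_sqrt (by positivity)
  have hu_meas : Measurable u := by
    apply Measurable.mul
    · exact (hg_meas.sub measurable_const).abs
    · exact (measurable_const.div ((hg_meas.const_mul 2).add measurable_const)).sqrt
  have hv_meas : Measurable v := by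
    exact (((hg_meas.const_mul 2).add measurable_const).div measurable_const).sqrt
  have hu2_int : Integrable (fun x => u x ^ 2) P := by
    refine hk_int.mono' (hu_meas.pow_const 2).aestronglyMeasurable (ae_of_all _ fun x => ?_)
    rw [Real.norm_eq_abs, abs_of_nonneg (by positivity)]
    exact hu_sq x
  have hv2_int : Integrable (fun x => v x ^ 2) P := by
    have : Integrable (fun x => (2 * g x + 4) / 3) P :=
      (((hg_int.const_mul 2).add (integrable_const 4)).div_const 3)
    exact this.congr (ae_of_all _ fun x => (hv_sq x).symm)
  have hu_mem : MemLp u 2 P := by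
    rw [memLp_two_iff_integrable_sq hu_meas.aestronglyMeasurable]
    exact hu2_int
  have hv_mem : MemLp v 2 P := by
    rw [memLp_two_iff_integrable_sq hv_meas.aestronglyMeasurable]
    exact hv2_int
  have hconj : (2:ℝ).HolderConjugate 2 := Real.HolderConjugate.two_two
  have hCS := integral_mul_le_Lp_mul_Lq_of_nonneg hconj
    (ae_of_all _ hu_nonneg) (ae_of_all _ hv_nonneg)
    (by simpa using hu_mem) (by simpa using hv_mem)
  -- rewrite the rpow's
  have h2 : ∀ f : X → ℝ, (fun a => f a ^ (2:ℝ)) = fun a => f a ^ (2:ℕ) := by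
    intro f; funext a; rw [← Real.rpow_natCast (f a) 2]; norm_num
  rw [h2 u, h2 v] at hCS
  have hu2_le : ∫ x, u x ^ 2 ∂P ≤ klDiv Q P := by
    rw [← hk_integral]
    exact integral_mono hu2_int hk_int hu_sq
  have hv2_eq : ∫ x, v x ^ 2 ∂P = 2 := by
    rw [integral_congr_ae (ae_of_all _ hv_sq)]
    have h2g : ∫ x, 2 * g x ∂P = 2 * ∫ x, g x ∂P := by
      simpa [smul_eq_mul] using integral_smul (2:ℝ) g
    rw [integral_div, integral_add (hg_int.const_mul 2) (integrable_const 4), h2g, hg_one]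
    simp; norm_num
  calc ∫ x, |g x - 1| ∂P = ∫ x, u x * v x ∂P := by
        exact (integral_congr_ae (ae_of_all _ huv)).symm
    _ ≤ (∫ x, u x ^ 2 ∂P) ^ ((1:ℝ)/2) * (∫ x, v x ^ 2 ∂P) ^ ((1:ℝ)/2) := hCS
    _ ≤ (klDiv Q P) ^ ((1:ℝ)/2) * (2:ℝ) ^ ((1:ℝ)/2) := by
        rw [hv2_eq]
        gcongr
    _ = Real.sqrt (2 * klDiv Q P) := by
        rw [mul_comm (2:ℝ) (klDiv Q P), Real.sqrt_mul hKL_nonneg,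
          Real.sqrt_eq_rpow, Real.sqrt_eq_rpow]

end Aux

/-- scaling-free model bias bound for statistical estimators
of i.i.d. samples with bounded differences constants C/n. -/
theorem iid_estimator_bias_bound
    {X : Type*} [MeasurableSpace X] {n : ℕ} (hn : 0 < n)
    (P Q : Measure X) [IsProbabilityMeasure P] [IsProbabilityMeasure Q]
    (hac : Q ≪ P)
    (hKL : Integrable (fun x => Real.log ((Q.rnDeriv P x).toReal)) Q)
    (ψ : (Fin n → X) → ℝ) (hψ : Measurable ψ) (C : ℝ)
    (hbd : ∀ (x : Fin n → X) (k : Fin n) (y : X),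
      |ψ x - ψ (Function.update x k y)| ≤ C / n) :
    |(∫ x, ψ x ∂(Measure.pi fun _ : Fin n => P))
      - (∫ x, ψ x ∂(Measure.pi fun _ : Fin n => Q))| ≤
      C * Real.sqrt (2 * klDiv Q P) := by
  have hne : Nonempty X := by
    by_contra h
    have h0 : (Set.univ : Set X) = ∅ := Set.univ_eq_empty_iff.mpr (not_nonempty_iff.mp h)
    have := measure_univ (μ := P)
    rw [h0] at this; simp at this
  obtain ⟨x₀⟩ := hne
  have hC : 0 ≤ C := by
    have := hbd (fun _ => x₀) ⟨0, hn⟩ x₀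
    rw [Function.update_eq_self] at this
    simp only [sub_self, abs_zero] at this
    have hn' : (0:ℝ) < n := by exact_mod_cast hn
    have h2 : 0 ≤ C / (n:ℝ) := this
    exact (div_nonneg_iff.mp h2).resolve_right (fun ⟨_, h⟩ => absurd hn' (not_lt.mpr h)) |>.1
  have hmain := main_induction P Q hac n ψ hψ (C / n) hbd
  have hnn : (n:ℝ) ≠ 0 := by exact_mod_cast hn.ne'
  rw [show (n:ℝ) * (C / n) = C by field_simp] at hmain
  have hpl1 := pinsker_l1 P Q hac hKL
  calc |(∫ x, ψ x ∂(Measure.pi fun _ : Fin n => P))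
      - (∫ x, ψ x ∂(Measure.pi fun _ : Fin n => Q))|
      ≤ C * ∫ x, |(Q.rnDeriv P x).toReal - 1| ∂P := hmain
    _ ≤ C * Real.sqrt (2 * klDiv Q P) := mul_le_mul_of_nonneg_left hpl1 hC
end

section
/- (Variance misspecification bound) If X is bounded, |X| ≤ M under both P and Q, then |Var_P[X] - Var_Q[X]| ≤ 8M² √(2 R(Q||P)). -/
open MeasureTheory ProbabilityTheory Real

lemma aux_log_lb {y : ℝ} (hy : 0 < y) : 1 - 1/y ≤ Real.log y := by
  have h := Real.log_le_sub_one_of_pos (show (0:ℝ) < 1/y by positivity)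
  rw [one_div, Real.log_inv] at h
  rw [one_div]
  linarith

lemma aux_m_mono : MonotoneOn (fun y : ℝ => (y+1) * Real.log y - 2*(y-1)) (Set.Ioi 0) := by
  apply monotoneOn_of_hasDerivWithinAt_nonneg (f' := fun y => Real.log y + 1/y - 1) (convex_Ioi 0)
  · apply ContinuousOn.sub
    · exact ContinuousOn.mul (by fun_prop) (Real.continuousOn_log.mono (by
        intro x hx; simp at hx ⊢; linarith))
    · fun_prop
  · intro x hx
    rw [interior_Ioi] at hx
    have hx0 : (x:ℝ) ≠ 0 := ne_of_gt hx
    have h1 : HasDerivAt (fun y : ℝ => (y+1) * Real.log y) (1 * Real.log x + (x+1) * x⁻¹) x :=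
      ((hasDerivAt_id x).add_const 1).mul (Real.hasDerivAt_log hx0)
    have h2 : HasDerivAt (fun y : ℝ => 2*(y-1)) 2 x := by
      simpa using ((hasDerivAt_id x).sub_const 1).const_mul 2
    have h3 := h1.sub h2
    have he : 1 * Real.log x + (x+1) * x⁻¹ - 2 = Real.log x + 1/x - 1 := by
      field_simp; ring
    rw [he] at h3
    exact h3.hasDerivWithinAt
  · intro x hx
    rw [interior_Ioi] at hx
    have := aux_log_lb hx
    linarith

lemma aux_key {y : ℝ} (hy : 0 ≤ y) : 3*(y-1)^2 ≤ (2*y+4)*(y*Real.log y - y + 1) := by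
  rcases eq_or_lt_of_le hy with h0 | hy'
  · rw [← h0]; norm_num
  · have hderiv : ∀ x : ℝ, 0 < x →
        HasDerivAt (fun y : ℝ => (2*y+4)*(y*Real.log y - y + 1) - 3*(y-1)^2)
          (4*((x+1) * Real.log x - 2*(x-1))) x := by
      intro x hx
      have hx0 : (x:ℝ) ≠ 0 := ne_of_gt hx
      have hi : HasDerivAt (fun y : ℝ => y*Real.log y - y + 1)
          ((1 * Real.log x + x * x⁻¹) - 1) x :=
        (((hasDerivAt_id x).mul (Real.hasDerivAt_log hx0)).sub (hasDerivAt_id x)).add_const 1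
      have ho : HasDerivAt (fun y : ℝ => 2*y+4) 2 x := by
        simpa using ((hasDerivAt_id x).const_mul 2).add_const 4
      have hq : HasDerivAt (fun y : ℝ => 3*(y-1)^2) (3*(2*(x-1))) x := by
        have := (((hasDerivAt_id x).sub_const 1).pow 2).const_mul 3
        simpa using this
      have h := (ho.mul hi).sub hq
      have he : 2 * (x*Real.log x - x + 1) + (2*x+4) * ((1 * Real.log x + x * x⁻¹) - 1)
          - 3*(2*(x-1)) = 4*((x+1) * Real.log x - 2*(x-1)) := by
        field_simp; ring
      rw [he] at h
      exact h
    have hcont : ContinuousOn (fun y : ℝ => (2*y+4)*(y*Real.log y - y + 1) - 3*(y-1)^2)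
        {(0:ℝ)}ᶜ := by
      apply ContinuousOn.sub _ (by fun_prop)
      exact ContinuousOn.mul (by fun_prop)
        (((continuousOn_id.mul Real.continuousOn_log).sub continuousOn_id).add continuousOn_const)
    have h1 : (fun y : ℝ => (2*y+4)*(y*Real.log y - y + 1) - 3*(y-1)^2) 1 = 0 := by
      simp
    rcases le_total y 1 with hy1 | hy1
    · have hanti : AntitoneOn (fun y : ℝ => (2*y+4)*(y*Real.log y - y + 1) - 3*(y-1)^2)
          (Set.Ioc 0 1) := by
        apply antitoneOn_of_hasDerivWithinAt_nonpos (convex_Ioc 0 1)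
          (hcont.mono (fun x hx => Set.mem_compl_singleton_iff.mpr (ne_of_gt hx.1)))
          (f' := fun x => 4*((x+1) * Real.log x - 2*(x-1)))
        · intro x hx
          rw [interior_Ioc] at hx
          exact (hderiv x hx.1).hasDerivWithinAt
        · intro x hx
          rw [interior_Ioc] at hx
          have hm := aux_m_mono (Set.mem_Ioi.mpr hx.1) (Set.mem_Ioi.mpr one_pos) hx.2.le
          simp only at hm
          simp only [Real.log_one] at hm
          linarith
      have := hanti (Set.mem_Ioc.mpr ⟨hy', hy1⟩) (Set.mem_Ioc.mpr ⟨one_pos, le_refl 1⟩) hy1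
      rw [h1] at this
      dsimp only at this
      linarith
    · have hmono : MonotoneOn (fun y : ℝ => (2*y+4)*(y*Real.log y - y + 1) - 3*(y-1)^2)
          (Set.Ici 1) := by
        apply monotoneOn_of_hasDerivWithinAt_nonneg (convex_Ici 1)
          (hcont.mono (fun x hx => Set.mem_compl_singleton_iff.mpr
            (ne_of_gt (lt_of_lt_of_le one_pos hx))))
          (f' := fun x => 4*((x+1) * Real.log x - 2*(x-1)))
        · intro x hx
          rw [interior_Ici] at hx
          exact (hderiv x (lt_trans one_pos (Set.mem_Ioi.mp hx))).hasDerivWithinAt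
        · intro x hx
          rw [interior_Ici] at hx
          have hm := aux_m_mono (Set.mem_Ioi.mpr one_pos) (Set.mem_Ioi.mpr (lt_trans one_pos (Set.mem_Ioi.mp hx))) (Set.mem_Ioi.mp hx).le
          simp only [Real.log_one] at hm
          linarith
      have := hmono (Set.mem_Ici.mpr (le_refl 1)) (Set.mem_Ici.mpr hy1) hy1
      rw [h1] at this
      dsimp only at this
      linarith

lemma aux_phi_nonneg {y : ℝ} (hy : 0 ≤ y) : 0 ≤ y * Real.log y - y + 1 := by
  have h4 : (0:ℝ) < 2*y+4 := by linarith
  nlinarith [aux_key hy, sq_nonneg (y-1)]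

lemma aux_pt {y l : ℝ} (hy : 0 ≤ y) (hl : 0 < l) :
    2*l*|y-1| ≤ l^2*(2*y+4)/3 + (y*Real.log y - y + 1) := by
  have hC := aux_key hy
  have h4 : (0:ℝ) < 2*y+4 := by linarith
  rcases abs_cases (y-1) with ⟨he, _⟩ | ⟨he, _⟩ <;> rw [he] <;>
    nlinarith [sq_nonneg (l*(2*y+4) - 3*(y-1)), sq_nonneg (l*(2*y+4) + 3*(y-1)),
      mul_pos hl h4, sq_nonneg (y-1), sq_nonneg l]

lemma aux_mean_dev (P Q : Measure ℝ) [IsProbabilityMeasure P] [IsProbabilityMeasure Q]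
    (hac : Q ≪ P) (f : ℝ → ℝ) (hfm : AEStronglyMeasurable f P) {C : ℝ}
    (hfP : ∀ᵐ x ∂P, |f x| ≤ C) :
    |∫ x, f x ∂Q - ∫ x, f x ∂P| ≤ C * ∫ x, |(Q.rnDeriv P x).toReal - 1| ∂P := by
  set g := fun x => (Q.rnDeriv P x).toReal with hg
  have hgint : Integrable g P := Measure.integrable_toReal_rnDeriv
  have hfQae : ∀ᵐ x ∂Q, |f x| ≤ C := hfP.filter_mono hac.ae_le
  have hfmQ : AEStronglyMeasurable f Q := hfm.mono_ac hac
  have hfintP : Integrable f P := by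
    refine Integrable.mono' (integrable_const C) hfm ?_
    simpa [Real.norm_eq_abs] using hfP
  have hfintQ : Integrable f Q := by
    refine Integrable.mono' (integrable_const C) hfmQ ?_
    simpa [Real.norm_eq_abs] using hfQae
  have hgf : Integrable (fun x => g x * f x) P := by
    have := (MeasureTheory.integrable_rnDeriv_smul_iff (f := f) hac).mpr hfintQ
    simpa [smul_eq_mul] using this
  have hQeq : ∫ x, f x ∂Q = ∫ x, g x * f x ∂P := by
    rw [← MeasureTheory.integral_rnDeriv_smul hac (f := f)]
    simp [smul_eq_mul]
    rfl
  have habs : Integrable (fun x => |g x - 1|) P := (hgint.sub (integrable_const 1)).abs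
  rw [hQeq, ← integral_sub hgf hfintP]
  have h1 : |∫ x, (g x * f x - f x) ∂P| ≤ ∫ x, |g x * f x - f x| ∂P := by
    simpa [Real.norm_eq_abs] using
      norm_integral_le_integral_norm (μ := P) (f := fun x => g x * f x - f x)
  refine h1.trans ?_
  have h2 : ∫ x, |g x * f x - f x| ∂P ≤ ∫ x, C * |g x - 1| ∂P := by
    refine integral_mono_of_nonneg (Filter.Eventually.of_forall fun x => abs_nonneg _)
      (habs.const_mul C) ?_
    filter_upwards [hfP] with x hx
    have : |g x * f x - f x| = |g x - 1| * |f x| := by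
      rw [← abs_mul]; ring_nf
    rw [this]
    calc |g x - 1| * |f x| ≤ |g x - 1| * C :=
          mul_le_mul_of_nonneg_left hx (abs_nonneg _)
      _ = C * |g x - 1| := mul_comm _ _
  refine h2.trans ?_
  rw [integral_const_mul]

lemma aux_pinsker (P Q : Measure ℝ) [IsProbabilityMeasure P] [IsProbabilityMeasure Q]
    (hac : Q ≪ P) (hKL : Integrable (fun x => Real.log ((Q.rnDeriv P x).toReal)) Q) :
    ∫ x, |(Q.rnDeriv P x).toReal - 1| ∂P ≤
      Real.sqrt (2 * ∫ x, Real.log ((Q.rnDeriv P x).toReal) ∂Q) := by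
  set g := fun x => (Q.rnDeriv P x).toReal with hg
  have hgnn : ∀ x, 0 ≤ g x := fun x => ENNReal.toReal_nonneg
  have hgint : Integrable g P := Measure.integrable_toReal_rnDeriv
  have habs : Integrable (fun x => |g x - 1|) P := (hgint.sub (integrable_const 1)).abs
  have hg1 : ∫ x, g x ∂P = 1 := by
    rw [hg, Measure.integral_toReal_rnDeriv hac]; simp
  have hglg : Integrable (fun x => g x * Real.log (g x)) P := by
    have := (MeasureTheory.integrable_rnDeriv_smul_iff
      (f := fun x => Real.log ((Q.rnDeriv P x).toReal)) hac).mpr hKL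
    simpa [smul_eq_mul] using this
  have hKLP : ∫ x, Real.log ((Q.rnDeriv P x).toReal) ∂Q = ∫ x, g x * Real.log (g x) ∂P := by
    rw [← MeasureTheory.integral_rnDeriv_smul hac (f := fun x => Real.log ((Q.rnDeriv P x).toReal))]
    simp [smul_eq_mul]
    rfl
  set K := ∫ x, g x * Real.log (g x) ∂P with hK
  set L := ∫ x, |g x - 1| ∂P with hL
  have hphi1 : Integrable (fun x => g x * Real.log (g x) - g x) P := hglg.sub hgint
  have hphi_int : Integrable (fun x => g x * Real.log (g x) - g x + 1) P :=
    hphi1.add (integrable_const 1)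
  have hphi_val : ∫ x, (g x * Real.log (g x) - g x + 1) ∂P = K := by
    rw [integral_add hphi1 (integrable_const 1), integral_sub hglg hgint, hg1]
    simp
    rfl
  have hK0 : 0 ≤ K := by
    rw [← hphi_val]
    exact integral_nonneg fun x => aux_phi_nonneg (hgnn x)
  have hL0 : 0 ≤ L := integral_nonneg fun x => abs_nonneg _
  have key : ∀ l : ℝ, 0 < l → L ≤ l + K / (2*l) := by
    intro l hl
    have hg24 : Integrable (fun x => 2 * g x + 4) P := (hgint.const_mul 2).add (integrable_const 4)
    have hwint : Integrable (fun x => l^2*(2*g x+4)/3) P := (hg24.const_mul (l^2)).div_const 3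
    have hint : ∫ x, 2*l*|g x - 1| ∂P ≤
        ∫ x, (l^2*(2*g x+4)/3 + (g x * Real.log (g x) - g x + 1)) ∂P := by
      exact integral_mono (habs.const_mul _) (hwint.add hphi_int) fun x => aux_pt (hgnn x) hl
    rw [integral_const_mul] at hint
    have hrhs : ∫ x, (l^2*(2*g x+4)/3 + (g x * Real.log (g x) - g x + 1)) ∂P
        = 2*l^2 + K := by
      rw [integral_add hwint hphi_int,
        hphi_val]
      have : ∫ x, l^2*(2*g x+4)/3 ∂P = l^2 * (∫ x, (2*g x+4) ∂P) / 3 := by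
        rw [← integral_const_mul, ← integral_div]
      rw [this, integral_add (hgint.const_mul 2) (integrable_const 4), integral_const_mul, hg1]
      simp
      ring
    rw [hrhs] at hint
    have h2l : (0:ℝ) < 2*l := by linarith
    rw [← sub_nonneg]
    have : l + K/(2*l) - L = (2*l^2 + K - 2*l*L) / (2*l) := by
      field_simp
    rw [this]
    apply div_nonneg (by linarith) h2l.le
  rw [hKLP]
  rcases eq_or_lt_of_le hK0 with hKz | hKp
  · have hL0' : L ≤ 0 := by
      refine le_of_forall_pos_le_add fun ε hε => ?_
      have := key ε hε
      rw [← hKz] at this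
      simpa using this
    have : Real.sqrt (2*K) ≥ 0 := Real.sqrt_nonneg _
    linarith
  · set s := Real.sqrt (2*K) with hs
    have hsp : 0 < s := Real.sqrt_pos.mpr (by linarith)
    have hs2 : s^2 = 2*K := Real.sq_sqrt (by linarith)
    have hkey := key (s/2) (by positivity)
    have : s/2 + K/(2*(s/2)) = s := by
      field_simp
      nlinarith [hs2]
    rw [this] at hkey
    exact hkey

/-- variance misspecification bound for bounded random variables. -/
theorem variance_misspecification_bound
    (P Q : Measure ℝ) [IsProbabilityMeasure P] [IsProbabilityMeasure Q]
    (hac : Q ≪ P)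
    (hKL : Integrable (fun x => Real.log ((Q.rnDeriv P x).toReal)) Q)
    (M : ℝ) (hM : 0 < M)
    (hP : ∀ᵐ x ∂P, |x| ≤ M) (hQ : ∀ᵐ x ∂Q, |x| ≤ M) :
    |variance id P - variance id Q| ≤ 8 * M^2 * Real.sqrt (2 * klDiv Q P) := by
  set L := ∫ x, |(Q.rnDeriv P x).toReal - 1| ∂P with hLdef
  have hL : L ≤ Real.sqrt (2 * klDiv Q P) := aux_pinsker P Q hac hKL
  have hL0 : 0 ≤ L := integral_nonneg fun x => abs_nonneg _
  have hP2 : ∀ᵐ x ∂P, |x^2| ≤ M^2 := by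
    filter_upwards [hP] with x hx
    rw [abs_of_nonneg (sq_nonneg x), ← sq_abs]
    exact pow_le_pow_left₀ (abs_nonneg x) hx 2
  have hQ2 : ∀ᵐ x ∂Q, |x^2| ≤ M^2 := by
    filter_upwards [hQ] with x hx
    rw [abs_of_nonneg (sq_nonneg x), ← sq_abs]
    exact pow_le_pow_left₀ (abs_nonneg x) hx 2
  have hd1 : |∫ x, x ∂Q - ∫ x, x ∂P| ≤ M * L :=
    aux_mean_dev P Q hac (fun x => x) aestronglyMeasurable_id hP
  have hd2 : |∫ x, x^2 ∂Q - ∫ x, x^2 ∂P| ≤ M^2 * L :=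
    aux_mean_dev P Q hac (fun x => x^2) (by fun_prop) hP2
  have haM : |∫ x, x ∂P| ≤ M := by
    have := norm_integral_le_of_norm_le (μ := P) (f := fun x : ℝ => x)
      (integrable_const M) (by simpa [Real.norm_eq_abs] using hP)
    simpa [Real.norm_eq_abs] using this
  have hbM : |∫ x, x ∂Q| ≤ M := by
    have := norm_integral_le_of_norm_le (μ := Q) (f := fun x : ℝ => x)
      (integrable_const M) (by simpa [Real.norm_eq_abs] using hQ)
    simpa [Real.norm_eq_abs] using this
  have hvarP : variance id P = ∫ x, x^2 ∂P - (∫ x, x ∂P)^2 := by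
    have hmem : MemLp (id : ℝ → ℝ) 2 P := memLp_of_bounded (a := -M) (b := M)
      (hP.mono fun x hx => abs_le.mp hx) aestronglyMeasurable_id 2
    rw [variance_eq_sub hmem]
    simp only [Pi.pow_apply, id_eq]
  have hvarQ : variance id Q = ∫ x, x^2 ∂Q - (∫ x, x ∂Q)^2 := by
    have hmem : MemLp (id : ℝ → ℝ) 2 Q := memLp_of_bounded (a := -M) (b := M)
      (hQ.mono fun x hx => abs_le.mp hx) aestronglyMeasurable_id 2
    rw [variance_eq_sub hmem]
    simp only [Pi.pow_apply, id_eq]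
  rw [hvarP, hvarQ]
  set a := ∫ x, x ∂P
  set b := ∫ x, x ∂Q
  set A := ∫ x, x^2 ∂P
  set B := ∫ x, x^2 ∂Q
  have hsplit : A - a^2 - (B - b^2) = (A - B) + (b - a)*(b + a) := by ring
  have hstep : |A - a^2 - (B - b^2)| ≤ M^2*L + (M*L)*(2*M) := by
    rw [hsplit]
    refine (abs_add_le _ _).trans ?_
    have h1 : |A - B| ≤ M^2 * L := by rw [abs_sub_comm]; exact hd2
    have h2 : |(b - a)*(b + a)| ≤ (M*L)*(2*M) := by
      rw [abs_mul]
      refine mul_le_mul hd1 ?_ (abs_nonneg _) (by positivity)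
      calc |b + a| ≤ |b| + |a| := abs_add_le _ _
        _ ≤ M + M := add_le_add hbM haM
        _ = 2*M := by ring
    linarith
  have hsq : 0 ≤ Real.sqrt (2 * klDiv Q P) := Real.sqrt_nonneg _
  have h3 : M^2*L + (M*L)*(2*M) = 3*M^2*L := by ring
  rw [h3] at hstep
  refine hstep.trans ?_
  have : 3*M^2*L ≤ 3*M^2*Real.sqrt (2 * klDiv Q P) := by
    apply mul_le_mul_of_nonneg_left hL (by positivity)
  nlinarith [sq_nonneg M, mul_nonneg (sq_nonneg M) hsq]
end

section
/- (Tightness of the GO divergence bound) Assume f is not P-a.s. constant and its centered cumulant generating function H(c) is finite on (0, d₊). If c⁺ ∈ (0, d₊) satisfies R(P^{c⁺}||P) = η², then the measure Q⁺ = P^{c⁺} attains the upper bound: E_{Q⁺}[f] - E_P[f] = inf_{c>0} { (1/c)(H(c) + η²) } = H'(c⁺) = max over all Q with R(Q||P) ≤ η² of E_Q[f] - E_P[f]. -/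
open MeasureTheory ProbabilityTheory Real

/-- Gibbs / Donsker–Varadhan inequality. -/
lemma gibbs_ineq {α : Type*} [MeasurableSpace α] {P Q : Measure α}
    [IsProbabilityMeasure P] [IsProbabilityMeasure Q] (hQP : Q ≪ P)
    {g : α → ℝ} (hg : Measurable g)
    (hgQ : Integrable g Q)
    (hlog : Integrable (fun x => Real.log ((Q.rnDeriv P x).toReal)) Q)
    (hexp : Integrable (fun x => Real.exp (g x)) P) :
    ∫ x, g x ∂Q ≤ Real.log (∫ x, Real.exp (g x) ∂P)
      + ∫ x, Real.log ((Q.rnDeriv P x).toReal) ∂Q := by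
  set r : α → ℝ := fun x => (Q.rnDeriv P x).toReal with hr
  set Z : ℝ := ∫ x, Real.exp (g x) ∂P with hZ
  have hZpos : 0 < Z := integral_exp_pos hexp
  have hrm : Measurable r := (Measure.measurable_rnDeriv Q P).ennreal_toReal
  set φ : α → ℝ := fun x => g x - Real.log (r x) with hφ
  have hφm : Measurable φ := hg.sub (hrm.log)
  have hφQ : Integrable φ Q := hgQ.sub hlog
  -- pointwise : r x * exp (φ x) ≤ exp (g x)
  have hpt : ∀ x, r x * Real.exp (φ x) ≤ Real.exp (g x) := by
    intro x
    rcases eq_or_lt_of_le (ENNReal.toReal_nonneg : 0 ≤ r x) with h | h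
    · rw [show r x = 0 from h.symm, zero_mul]; exact (Real.exp_pos _).le
    · have : Real.exp (φ x) = Real.exp (g x) / r x := by
        rw [hφ, Real.exp_sub, Real.exp_log h]
      rw [this, mul_div_cancel₀ _ h.ne']
  have hptn : ∀ x, 0 ≤ r x * Real.exp (φ x) := fun x =>
    mul_nonneg ENNReal.toReal_nonneg (Real.exp_pos _).le
  have hP_int : Integrable (fun x => r x * Real.exp (φ x)) P := by
    refine hexp.mono ((hrm.mul hφm.exp).aestronglyMeasurable) (ae_of_all _ fun x => ?_)
    rw [Real.norm_eq_abs, Real.norm_eq_abs, abs_of_nonneg (hptn x),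
      abs_of_nonneg (Real.exp_pos _).le]
    exact hpt x
  have hQexp : Integrable (fun x => Real.exp (φ x)) Q := by
    refine (integrable_rnDeriv_smul_iff hQP).mp ?_
    simpa [smul_eq_mul] using hP_int
  have h1 : ∫ x, Real.exp (φ x) ∂Q ≤ Z := by
    rw [← integral_rnDeriv_smul hQP (f := fun x => Real.exp (φ x))]
    simp only [smul_eq_mul]
    exact integral_mono hP_int hexp hpt
  -- main Jensen-free step : u ≤ exp u - 1
  have h2 : ∀ x, φ x - Real.log Z ≤ Real.exp (φ x) / Z - 1 := by
    intro x
    have := Real.add_one_le_exp (φ x - Real.log Z)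
    rw [Real.exp_sub, Real.exp_log hZpos] at this
    linarith
  have h3 : ∫ x, (φ x - Real.log Z) ∂Q ≤ ∫ x, (Real.exp (φ x) / Z - 1) ∂Q :=
    integral_mono (hφQ.sub (integrable_const _))
      ((hQexp.div_const Z).sub (integrable_const 1)) h2
  rw [integral_sub hφQ (integrable_const _), integral_sub (hQexp.div_const Z)
    (integrable_const 1), integral_const, integral_const] at h3
  simp only [measure_univ, probReal_univ, ENNReal.toReal_one, one_smul, smul_eq_mul, one_mul] at h3
  rw [integral_div] at h3
  have h4 : (∫ x, Real.exp (φ x) ∂Q) / Z - 1 ≤ 0 := by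
    have := (div_le_div_iff_of_pos_right hZpos).mpr h1
    rw [div_self hZpos.ne'] at this
    linarith
  have h5 : ∫ x, φ x ∂Q ≤ Real.log Z := by linarith
  have h6 : ∫ x, φ x ∂Q = ∫ x, g x ∂Q - ∫ x, Real.log (r x) ∂Q :=
    integral_sub hgQ hlog
  linarith


lemma exp_sandwich {a b s t : ℝ} (has : a ≤ s) (hsb : s ≤ b) :
    Real.exp (s * t) ≤ Real.exp (a * t) + Real.exp (b * t) := by
  rcases le_or_gt 0 t with h | h
  · have : s * t ≤ b * t := mul_le_mul_of_nonneg_right hsb h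
    have := Real.exp_le_exp.mpr this
    have := (Real.exp_pos (a * t)).le
    linarith
  · have : s * t ≤ a * t := mul_le_mul_of_nonpos_right has h.le
    have := Real.exp_le_exp.mpr this
    have := (Real.exp_pos (b * t)).le
    linarith

lemma abs_mul_exp_le {δ s t : ℝ} (hδ : 0 < δ) :
    |t| * Real.exp (s * t) ≤
      (1/δ) * (Real.exp ((s + δ) * t) + Real.exp ((s - δ) * t)) := by
  have h1 : δ * |t| ≤ Real.exp (δ * t) + Real.exp (-(δ * t)) := by
    have h2 : δ * |t| ≤ Real.exp (δ * |t|) := by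
      linarith [Real.add_one_le_exp (δ * |t|)]
    rcases abs_cases t with ⟨h, _⟩ | ⟨h, _⟩
    · rw [h] at h2 ⊢
      linarith [(Real.exp_pos (-(δ * t))).le]
    · rw [h] at h2 ⊢
      rw [mul_neg] at h2 ⊢
      linarith [(Real.exp_pos (δ * t)).le]
  have h3 : (δ * |t|) * Real.exp (s * t) ≤
      (Real.exp (δ * t) + Real.exp (-(δ * t))) * Real.exp (s * t) :=
    mul_le_mul_of_nonneg_right h1 (Real.exp_pos _).le
  have h4 : (Real.exp (δ * t) + Real.exp (-(δ * t))) * Real.exp (s * t)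
      = Real.exp ((s + δ) * t) + Real.exp ((s - δ) * t) := by
    rw [add_mul, ← Real.exp_add, ← Real.exp_add]
    ring_nf
  rw [h4] at h3
  calc |t| * Real.exp (s * t) = (1/δ) * ((δ * |t|) * Real.exp (s * t)) := by
        field_simp
    _ ≤ (1/δ) * (Real.exp ((s + δ) * t) + Real.exp ((s - δ) * t)) :=
        mul_le_mul_of_nonneg_left h3 (by positivity)

/-- differentiation under the integral sign for `c ↦ ∫ exp (c g)`. -/
lemma hasDerivAt_integral_exp {α : Type*} [MeasurableSpace α] {P : Measure α}
    [IsProbabilityMeasure P] {g : α → ℝ} (hg : Measurable g) {c₀ δ : ℝ} (hδ : 0 < δ)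
    (hia : Integrable (fun x => Real.exp ((c₀ - 2*δ) * g x)) P)
    (hib : Integrable (fun x => Real.exp ((c₀ + 2*δ) * g x)) P) :
    Integrable (fun x => g x * Real.exp (c₀ * g x)) P ∧
      HasDerivAt (fun c => ∫ x, Real.exp (c * g x) ∂P)
        (∫ x, g x * Real.exp (c₀ * g x) ∂P) c₀ := by
  set a : ℝ := c₀ - 2*δ with ha
  set b : ℝ := c₀ + 2*δ with hb
  have hsum : Integrable (fun x => Real.exp (a * g x) + Real.exp (b * g x)) P := hia.add hib
  have hsumn : ∀ x, 0 ≤ Real.exp (a * g x) + Real.exp (b * g x) := fun x => by positivity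
  have hmeas : ∀ c : ℝ, Measurable (fun x => Real.exp (c * g x)) :=
    fun c => (hg.const_mul c).exp
  have hint_mid : ∀ s : ℝ, a ≤ s → s ≤ b → Integrable (fun x => Real.exp (s * g x)) P := by
    intro s h1 h2
    refine hsum.mono ((hmeas s).aestronglyMeasurable) (ae_of_all _ fun x => ?_)
    rw [Real.norm_eq_abs, Real.norm_eq_abs, abs_of_nonneg (Real.exp_pos _).le,
      abs_of_nonneg (hsumn x)]
    exact exp_sandwich h1 h2
  have key := hasDerivAt_integral_of_dominated_loc_of_deriv_le (μ := P)
    (F := fun c x => Real.exp (c * g x)) (F' := fun c x => g x * Real.exp (c * g x))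
    (x₀ := c₀) (s := Metric.ball c₀ δ)
    (bound := fun x => (2/δ) * (Real.exp (a * g x) + Real.exp (b * g x)))
    (Metric.ball_mem_nhds c₀ hδ)
    (Filter.Eventually.of_forall fun c => (hmeas c).aestronglyMeasurable)
    (hint_mid c₀ (by linarith) (by linarith))
    ((hg.mul (hmeas c₀)).aestronglyMeasurable)
    (ae_of_all _ fun x s hs => ?_)
    (hsum.const_mul _)
    (ae_of_all _ fun x s _ => ?_)
  · exact key
  · -- bound
    have hs' : |s - c₀| < δ := by simpa [Real.dist_eq] using Metric.mem_ball.mp hs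
    have h1 : a ≤ s + δ := by cases abs_lt.mp hs'; linarith
    have h2 : s + δ ≤ b := by cases abs_lt.mp hs'; linarith
    have h3 : a ≤ s - δ := by cases abs_lt.mp hs'; linarith
    have h4 : s - δ ≤ b := by cases abs_lt.mp hs'; linarith
    rw [Real.norm_eq_abs, abs_mul, abs_of_nonneg (Real.exp_pos _).le]
    calc |g x| * Real.exp (s * g x)
        ≤ (1/δ) * (Real.exp ((s + δ) * g x) + Real.exp ((s - δ) * g x)) :=
          abs_mul_exp_le hδ
      _ ≤ (1/δ) * ((Real.exp (a * g x) + Real.exp (b * g x))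
            + (Real.exp (a * g x) + Real.exp (b * g x))) := by
          apply mul_le_mul_of_nonneg_left _ (by positivity)
          exact add_le_add (exp_sandwich h1 h2) (exp_sandwich h3 h4)
      _ = (2/δ) * (Real.exp (a * g x) + Real.exp (b * g x)) := by ring
  · -- differentiability
    have h := (hasDerivAt_mul_const (g x)).exp (x := s)
    simpa [mul_comm] using h


lemma tilted_add_const {α : Type*} [MeasurableSpace α] (μ : Measure α) (f : α → ℝ) (r : ℝ) :
    μ.tilted (fun x => f x + r) = μ.tilted f := by
  by_cases hf : Integrable (fun x => Real.exp (f x)) μ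
  · unfold Measure.tilted
    congr 1
    funext x
    congr 1
    simp_rw [Real.exp_add, integral_mul_const]
    rw [mul_div_mul_right _ _ (Real.exp_ne_zero r)]
  · have hf' : ¬ Integrable (fun x => Real.exp (f x + r)) μ := by
      intro h
      apply hf
      have := h.mul_const (Real.exp (-r))
      simp_rw [Real.exp_add, mul_assoc, ← Real.exp_add] at this
      simpa using this
    rw [tilted_of_not_integrable hf, tilted_of_not_integrable hf']

/-- tightness of the goal-oriented divergence bound: the tilted
measure Q⁺ = P^{c⁺} with R(P^{c⁺}||P) = η² attains the upper bound. -/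

theorem go_divergence_tightness
    {α : Type*} [MeasurableSpace α] (P : Measure α) [IsProbabilityMeasure P]
    (f : α → ℝ) (hf : Measurable f) (hfP : Integrable f P)
    (hnc : ¬ ∃ r : ℝ, f =ᵐ[P] fun _ => r)
    (d : ℝ) (hd : 0 < d)
    (hint : ∀ c ∈ Set.Ioo (0:ℝ) d,
      Integrable (fun x => Real.exp (c * (f x - ∫ y, f y ∂P))) P)
    (H : ℝ → ℝ)
    (hH : ∀ c : ℝ, H c = Real.log (∫ x, Real.exp (c * (f x - ∫ y, f y ∂P)) ∂P))
    (η cplus : ℝ) (hc : cplus ∈ Set.Ioo (0:ℝ) d)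
    (hkl : klDiv (P.tilted fun x => cplus * f x) P = η^2) :
    (∫ x, f x ∂(P.tilted fun x => cplus * f x)) - (∫ y, f y ∂P) =
      sInf {y : ℝ | ∃ c : ℝ, 0 < c ∧
        Integrable (fun x => Real.exp (c * (f x - ∫ z, f z ∂P))) P ∧
        y = (1/c) * (H c + η^2)} ∧
    (∫ x, f x ∂(P.tilted fun x => cplus * f x)) - (∫ y, f y ∂P) = deriv H cplus ∧
    IsGreatest {y : ℝ | ∃ Q : Measure α, IsProbabilityMeasure Q ∧ Q ≪ P ∧
        Integrable f Q ∧
        Integrable (fun x => Real.log ((Q.rnDeriv P x).toReal)) Q ∧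
        klDiv Q P ≤ η^2 ∧ y = (∫ x, f x ∂Q) - ∫ z, f z ∂P}
      ((∫ x, f x ∂(P.tilted fun x => cplus * f x)) - ∫ y, f y ∂P) := by
  obtain ⟨hc0, hcd⟩ := hc
  set m := ∫ y, f y ∂P with hm
  have hgm : Measurable (fun x => f x - m) := hf.sub measurable_const
  set δ := min cplus (d - cplus) / 4 with hδdef
  have hδ : 0 < δ := by
    have : 0 < min cplus (d - cplus) := lt_min hc0 (by linarith)
    positivity
  have h4a : 4*δ ≤ cplus := by
    have := min_le_left cplus (d - cplus); rw [hδdef]; linarith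
  have h4b : 4*δ ≤ d - cplus := by
    have := min_le_right cplus (d - cplus); rw [hδdef]; linarith
  have hia := hint (cplus - 2*δ) ⟨by linarith, by linarith⟩
  have hib := hint (cplus + 2*δ) ⟨by linarith, by linarith⟩
  obtain ⟨hD_int, hZD⟩ := hasDerivAt_integral_exp (P := P) (g := fun x => f x - m)
    hgm hδ hia hib
  set Zc := ∫ x, Real.exp (cplus * (f x - m)) ∂P with hZc
  have hIc : Integrable (fun x => Real.exp (cplus * (f x - m))) P := hint cplus ⟨hc0, hcd⟩
  have hZpos : 0 < Zc := integral_exp_pos hIc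
  set D : ℝ := (∫ x, (f x - m) * Real.exp (cplus * (f x - m)) ∂P) / Zc with hD
  -- derivative of H at cplus
  have hHfun : H = fun c => Real.log (∫ x, Real.exp (c * (f x - m)) ∂P) := funext hH
  have hlogd : HasDerivAt H D cplus := by
    rw [hHfun]
    have h := (Real.hasDerivAt_log hZpos.ne').comp cplus hZD
    simpa [Function.comp_def, hD, ← hZc, div_eq_inv_mul] using h
  have hderivH : deriv H cplus = D := hlogd.deriv
  -- the tilted measure
  set Q := P.tilted (fun x => cplus * f x) with hQdef
  have hQg : Q = P.tilted (fun x => cplus * (f x - m)) := by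
    rw [hQdef]
    have he : (fun x => cplus * f x) = fun x => (cplus * (f x - m)) + cplus * m := by
      funext x; ring
    rw [he, tilted_add_const]
  have hQP : Q ≪ P := hQdef ▸ tilted_absolutelyContinuous P _
  have hQprob : IsProbabilityMeasure Q := by
    rw [hQg]; exact isProbabilityMeasure_tilted hIc
  -- rnDeriv of Q
  have hrn : (Q.rnDeriv P) =ᵐ[P]
      fun x => ENNReal.ofReal (Real.exp (cplus * (f x - m)) / Zc) := by
    rw [hQg, hZc]
    exact rnDeriv_tilted_left_self ((hgm.const_mul cplus).aemeasurable)
  -- integrability of f under Q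
  have hIg : Integrable (fun x => f x - m) Q := by
    refine (integrable_rnDeriv_smul_iff hQP).mp ?_
    have hae : (fun x => (Q.rnDeriv P x).toReal • (f x - m)) =ᵐ[P]
        (fun x => ((f x - m) * Real.exp (cplus * (f x - m))) / Zc) := by
      filter_upwards [hrn] with x hx
      rw [smul_eq_mul, hx, ENNReal.toReal_ofReal (by positivity)]
      ring
    exact Integrable.congr (hD_int.div_const Zc) hae.symm
  have hIf : Integrable f Q := by
    have h2 := hIg.add (integrable_const (μ := Q) m)
    have he : ((fun x => f x - m) + fun _ => m) = f := by funext x; simp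
    rwa [he] at h2
  have hGQ : ∫ x, (f x - m) ∂Q = D := by
    rw [hQg, integral_tilted]
    simp only [smul_eq_mul]
    rw [hD, ← hZc, ← integral_div]
    apply integral_congr_ae
    apply ae_of_all
    intro x
    ring
  have hintQ : (∫ x, f x ∂Q) - m = D := by
    rw [← hGQ, integral_sub hIf (integrable_const m), integral_const]
    simp [measure_univ]
  -- log rnDeriv over Q
  have hlogrn : (fun x => Real.log ((Q.rnDeriv P x).toReal)) =ᵐ[Q]
      (fun x => cplus * (f x - m) - Real.log Zc) := by
    have h := log_rnDeriv_tilted_left_self (μ := P) (f := fun x => cplus * (f x - m)) hIc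
    rw [← hQg, ← hZc] at h
    exact h.filter_mono hQP.ae_le
  have hIlog : Integrable (fun x => Real.log ((Q.rnDeriv P x).toReal)) Q :=
    Integrable.congr ((hIg.const_mul cplus).sub (integrable_const _)) hlogrn.symm
  have hklQ : klDiv Q P = cplus * D - Real.log Zc := by
    show (∫ x, Real.log ((Q.rnDeriv P x).toReal) ∂Q) = _
    calc (∫ x, Real.log ((Q.rnDeriv P x).toReal) ∂Q)
        = ∫ x, (cplus * (f x - m) - Real.log Zc) ∂Q := integral_congr_ae hlogrn
      _ = cplus * (∫ x, (f x - m) ∂Q) - Real.log Zc := by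
          rw [integral_sub (hIg.const_mul cplus) (integrable_const _),
            integral_const, integral_const_mul]
          simp [measure_univ]
      _ = cplus * D - Real.log Zc := by rw [hGQ]
  have hHc : H cplus = Real.log Zc := by rw [hH cplus, ← hZc]
  have hetaD : cplus * D - H cplus = η^2 := by
    rw [hHc, ← hklQ]; exact hkl
  -- Gibbs applications
  have gibbs_c : ∀ c : ℝ, Integrable (fun x => Real.exp (c * (f x - m))) P →
      ∀ (Q' : Measure α), IsProbabilityMeasure Q' → Q' ≪ P → Integrable f Q' →
      Integrable (fun x => Real.log ((Q'.rnDeriv P x).toReal)) Q' →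
      c * ((∫ x, f x ∂Q') - m) ≤ H c + klDiv Q' P := by
    intro c hci Q' hQ'prob hQ'P hfQ' hlogQ'
    haveI := hQ'prob
    have hgc : Measurable (fun x => c * (f x - m)) := (hf.sub measurable_const).const_mul c
    have hgQ' : Integrable (fun x => c * (f x - m)) Q' :=
      (hfQ'.sub (integrable_const m)).const_mul c
    have h := gibbs_ineq hQ'P hgc hgQ' hlogQ' hci
    rw [integral_const_mul, integral_sub hfQ' (integrable_const m), integral_const] at h
    simp only [measure_univ, probReal_univ, ENNReal.toReal_one, one_smul] at h
    rw [hH c]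
    exact h
  refine ⟨?_, ?_, ?_⟩
  · -- sInf
    rw [hintQ]
    set S := {y : ℝ | ∃ c : ℝ, 0 < c ∧
      Integrable (fun x => Real.exp (c * (f x - m))) P ∧
      y = (1/c) * (H c + η^2)} with hS
    have hmemD : D ∈ S := by
      refine ⟨cplus, hc0, hIc, ?_⟩
      have h1 : H cplus + η^2 = cplus * D := by linarith
      rw [h1]
      field_simp
    have hlb : ∀ y ∈ S, D ≤ y := by
      rintro y ⟨c, hcpos, hci, rfl⟩
      have h := gibbs_c c hci Q hQprob hQP hIf hIlog
      rw [hintQ, hkl] at h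
      rw [one_div, ← div_eq_inv_mul]
      exact (le_div_iff₀ hcpos).mpr (by linarith)
    exact le_antisymm (le_csInf ⟨D, hmemD⟩ hlb)
      (csInf_le ⟨D, fun y hy => hlb y hy⟩ hmemD)
  · rw [hintQ, hderivH]
  · constructor
    · exact ⟨Q, hQprob, hQP, hIf, hIlog, le_of_eq hkl, rfl⟩
    · rintro y ⟨Q', hQ'prob, hQ'P, hfQ', hlogQ', hklle, rfl⟩
      have h := gibbs_c cplus hIc Q' hQ'prob hQ'P hfQ' hlogQ'
      rw [hintQ]
      nlinarith [h, hklle, hetaD, hc0]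
end

section
/- (Saturation at the essential supremum) Let f be bounded above P-a.s. with essential supremum f₊, H(c) = log E_P[exp(c(f - E_P f))] finite for all c > 0, and suppose M₊ := lim_{c→∞} (c H'(c) - H(c)) is finite. Then for any η² > M₊, inf_{c>0} { (1/c)(H(c) + η²) } = f₊ - E_P[f], and this equals sup over all Q with R(Q||P) ≤ η² of E_Q[f] - E_P[f]. -/
open MeasureTheory ProbabilityTheory Real Filter

private lemma aux_deriv {α : Type*} [MeasurableSpace α] {P : Measure α} [IsProbabilityMeasure P]
    {g : α → ℝ} (hg : Measurable g) (hgi : Integrable g P) {a : ℝ} (ha : 0 ≤ a)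
    (hub : ∀ᵐ x ∂P, g x ≤ a)
    (hint : ∀ c : ℝ, 0 < c → Integrable (fun x => Real.exp (c * g x)) P)
    {c : ℝ} (hc : 0 < c) :
    Integrable (fun x => g x * Real.exp (c * g x)) P ∧
      HasDerivAt (fun t => ∫ x, Real.exp (t * g x) ∂P)
        (∫ x, g x * Real.exp (c * g x) ∂P) c := by
  have := hasDerivAt_integral_of_dominated_loc_of_deriv_le (μ := P)
    (F := fun t x => Real.exp (t * g x)) (F' := fun t x => g x * Real.exp (t * g x))
    (x₀ := c) (bound := fun x => |g x| * Real.exp (2 * c * a)) (s := Metric.ball c (c / 2))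
    (Metric.ball_mem_nhds c (by positivity))
    (Filter.Eventually.of_forall fun t => ((hg.const_mul t).exp).aestronglyMeasurable)
    (hint c hc)
    ((hg.mul (hg.const_mul c).exp).aestronglyMeasurable)
    ?_ (hgi.abs.mul_const _) ?_
  · exact this
  · filter_upwards [hub] with x hx
    intro t ht
    have ht' : |t - c| < c / 2 := by simpa [Real.dist_eq] using Metric.mem_ball.mp ht
    have ht1 : 0 < t := by cases abs_sub_lt_iff.mp ht'; linarith
    have ht2 : t ≤ 2 * c := by cases abs_sub_lt_iff.mp ht'; linarith
    rw [Real.norm_eq_abs, abs_mul, Real.abs_exp]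
    have hexp : t * g x ≤ 2 * c * a := by
      rcases le_or_gt (g x) 0 with h | h
      · nlinarith
      · nlinarith
    exact mul_le_mul_of_nonneg_left (Real.exp_le_exp.2 hexp) (abs_nonneg _)
  · refine Filter.Eventually.of_forall fun x => fun t _ => ?_
    have := (hasDerivAt_mul_const (g x) (x := t)).exp
    simpa [mul_comm] using this

private lemma aux_int_tilted {α : Type*} [MeasurableSpace α] {P : Measure α} [IsProbabilityMeasure P]
    {g : α → ℝ} (hg : Measurable g) {c : ℝ}
    (hint : Integrable (fun x => Real.exp (c * g x)) P)
    (ψ : α → ℝ) (hψ : Integrable (fun x => ψ x * Real.exp (c * g x)) P) :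
    Integrable ψ (P.tilted fun x => c * g x) := by
  have hZ : 0 < ∫ x, Real.exp (c * g x) ∂P := integral_exp_pos hint
  rw [Measure.tilted, integrable_withDensity_iff
    (by measurability) (Filter.Eventually.of_forall fun x => ENNReal.ofReal_lt_top)]
  refine (hψ.div_const (∫ x, Real.exp (c * g x) ∂P)).congr ?_
  refine Filter.Eventually.of_forall fun x => ?_
  simp only []
  rw [ENNReal.toReal_ofReal (by positivity)]
  ring

private lemma aux_integral_g_tilted {α : Type*} [MeasurableSpace α] {P : Measure α}
    [IsProbabilityMeasure P] {g : α → ℝ} {c : ℝ} :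
    ∫ x, g x ∂(P.tilted fun x => c * g x) =
      (∫ x, g x * Real.exp (c * g x) ∂P) / ∫ x, Real.exp (c * g x) ∂P := by
  rw [integral_tilted]
  have : ∀ x : α, (Real.exp (c * g x) / ∫ x, Real.exp (c * g x) ∂P) • g x
      = (g x * Real.exp (c * g x)) / ∫ x, Real.exp (c * g x) ∂P := fun x => by
    rw [smul_eq_mul]; ring
  simp_rw [this]
  rw [integral_div]

private lemma aux_tangent {α : Type*} [MeasurableSpace α] {P : Measure α} [IsProbabilityMeasure P]
    {g : α → ℝ} (hg : Measurable g) {a : ℝ}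
    (hub : ∀ᵐ x ∂P, g x ≤ a)
    {c c' : ℝ} (hc : 0 < c) (hcc' : c < c')
    (hintc : Integrable (fun x => Real.exp (c * g x)) P)
    (hintc' : Integrable (fun x => Real.exp (c' * g x)) P)
    (hdint : Integrable (fun x => g x * Real.exp (c' * g x)) P) :
    (c - c') * ((∫ x, g x * Real.exp (c' * g x) ∂P) / ∫ x, Real.exp (c' * g x) ∂P) ≤
      Real.log (∫ x, Real.exp (c * g x) ∂P) - Real.log (∫ x, Real.exp (c' * g x) ∂P) := by
  set Q := P.tilted fun x => c' * g x with hQdef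
  have hQprob : IsProbabilityMeasure Q := isProbabilityMeasure_tilted hintc'
  have habs : Q ≪ P := tilted_absolutelyContinuous P _
  have hubQ : ∀ᵐ x ∂Q, g x ≤ a := habs.ae_le hub
  set φ : α → ℝ := fun x => Real.exp ((c - c') * g x) with hφdef
  have hφP : Integrable (fun x => φ x * Real.exp (c' * g x)) P := by
    refine hintc.congr (Filter.Eventually.of_forall fun x => ?_)
    rw [hφdef]; simp only []
    rw [← Real.exp_add]; ring_nf
  have hfi : Integrable φ Q := aux_int_tilted hg hintc' φ hφP
  have hgQ : Integrable g Q := aux_int_tilted hg hintc' g hdint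
  have hgi' : Integrable (Real.log ∘ φ) Q := by
    refine (hgQ.const_mul (c - c')).congr (Filter.Eventually.of_forall fun x => ?_)
    simp [hφdef, Function.comp, Real.log_exp]
  have hconc : ConcaveOn ℝ (Set.Ici (Real.exp ((c - c') * a))) Real.log :=
    strictConcaveOn_log_Ioi.concaveOn.subset
      (fun y hy => lt_of_lt_of_le (Real.exp_pos _) hy) (convex_Ici _)
  have hcont : ContinuousOn Real.log (Set.Ici (Real.exp ((c - c') * a))) :=
    Real.continuousOn_log.mono fun y hy =>
      (ne_of_gt (lt_of_lt_of_le (Real.exp_pos _) hy))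
  have hfs : ∀ᵐ x ∂Q, φ x ∈ Set.Ici (Real.exp ((c - c') * a)) := by
    filter_upwards [hubQ] with x hx
    exact Real.exp_le_exp.2 (mul_le_mul_of_nonpos_left hx (by linarith))
  have hjen := hconc.le_map_integral hcont isClosed_Ici hfs hfi hgi'
  have h1 : ∫ x, Real.log (φ x) ∂Q
      = (c - c') * ((∫ x, g x * Real.exp (c' * g x) ∂P) / ∫ x, Real.exp (c' * g x) ∂P) := by
    have : ∀ x : α, Real.log (φ x) = (c - c') * g x := fun x => by
      simp [hφdef, Function.comp, Real.log_exp]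
    simp_rw [this]
    rw [integral_const_mul, aux_integral_g_tilted]
  have h2 : ∫ x, φ x ∂Q
      = (∫ x, Real.exp (c * g x) ∂P) / ∫ x, Real.exp (c' * g x) ∂P := by
    rw [hQdef, hφdef]
    have := integral_exp_tilted (μ := P) (fun x => c' * g x) (fun x => (c - c') * g x)
    rw [this]
    congr 1
    refine integral_congr_ae (Filter.Eventually.of_forall fun x => ?_)
    simp only [Pi.add_apply]
    congr 1; ring
  rw [h1, h2] at hjen
  rwa [Real.log_div (integral_exp_pos hintc).ne' (integral_exp_pos hintc').ne'] at hjen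

/-- saturation of the goal-oriented divergence bound at the
essential supremum for large KL tolerances. -/
theorem go_divergence_saturation
    {α : Type*} [MeasurableSpace α] (P : Measure α) [IsProbabilityMeasure P]
    (f : α → ℝ) (hf : Measurable f) (hfP : Integrable f P)
    (fplus : ℝ) (hub : ∀ᵐ x ∂P, f x ≤ fplus)
    (hlub : ∀ b : ℝ, (∀ᵐ x ∂P, f x ≤ b) → fplus ≤ b)
    (H : ℝ → ℝ)
    (hH : ∀ c : ℝ, H c = Real.log (∫ x, Real.exp (c * (f x - ∫ y, f y ∂P)) ∂P))
    (hint : ∀ c : ℝ, 0 < c →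
      Integrable (fun x => Real.exp (c * (f x - ∫ y, f y ∂P))) P)
    (Mplus : ℝ)
    (hM : Filter.Tendsto (fun c => c * deriv H c - H c) Filter.atTop (nhds Mplus))
    (η : ℝ) (hη : Mplus < η^2) :
    sInf {y : ℝ | ∃ c : ℝ, 0 < c ∧ y = (1/c) * (H c + η^2)} =
      fplus - ∫ y, f y ∂P ∧
    IsLUB {y : ℝ | ∃ Q : Measure α, IsProbabilityMeasure Q ∧ Q ≪ P ∧
        Integrable f Q ∧
        Integrable (fun x => Real.log ((Q.rnDeriv P x).toReal)) Q ∧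
        klDiv Q P ≤ η^2 ∧ y = (∫ x, f x ∂Q) - ∫ z, f z ∂P}
      (fplus - ∫ y, f y ∂P) := by
  set m := ∫ y, f y ∂P with hm
  have hgmeas : Measurable fun x => f x - m := hf.sub measurable_const
  have hgi : Integrable (fun x => f x - m) P := hfP.sub (integrable_const m)
  have hma : m ≤ fplus := by
    have h1 : ∫ y, f y ∂P ≤ ∫ _, fplus ∂P := integral_mono_ae hfP (integrable_const _) hub
    simpa [← hm] using h1
  set a := fplus - m with hadef
  have ha : 0 ≤ a := by rw [hadef]; linarith
  have hgub : ∀ᵐ x ∂P, f x - m ≤ a := hub.mono fun x hx => by rw [hadef]; linarith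
  have hint' : ∀ c : ℝ, 0 < c → Integrable (fun x => Real.exp (c * (f x - m))) P := hint
  have hMpos : ∀ c : ℝ, 0 < c → 0 < ∫ x, Real.exp (c * (f x - m)) ∂P :=
    fun c hc => integral_exp_pos (hint' c hc)
  have hH' : ∀ c, H c = Real.log (∫ x, Real.exp (c * (f x - m)) ∂P) := hH
  have hDD := fun (c : ℝ) (hc : 0 < c) => aux_deriv hgmeas hgi ha hgub hint' hc
  have hDint : ∀ c : ℝ, 0 < c →
      Integrable (fun x => (f x - m) * Real.exp (c * (f x - m))) P := fun c hc => (hDD c hc).1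
  have hHderiv : ∀ c : ℝ, 0 < c → HasDerivAt H
      ((∫ x, (f x - m) * Real.exp (c * (f x - m)) ∂P) / ∫ x, Real.exp (c * (f x - m)) ∂P) c := by
    intro c hc
    have h0 : H = fun t => Real.log (∫ x, Real.exp (t * (f x - m)) ∂P) := funext hH'
    rw [h0]
    exact ((hDD c hc).2).log (hMpos c hc).ne'
  have hderivH : ∀ c : ℝ, 0 < c → deriv H c =
      (∫ x, (f x - m) * Real.exp (c * (f x - m)) ∂P) / ∫ x, Real.exp (c * (f x - m)) ∂P :=
    fun c hc => (hHderiv c hc).deriv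
  -- H c ≤ c * a
  have hHle : ∀ c : ℝ, 0 < c → H c ≤ c * a := by
    intro c hc
    rw [hH']
    have hle : ∫ x, Real.exp (c * (f x - m)) ∂P ≤ Real.exp (c * a) := by
      have h := integral_mono_ae (hint' c hc) (integrable_const (Real.exp (c * a)))
        (hgub.mono fun x hx => Real.exp_le_exp.2 (by nlinarith))
      simpa using h
    calc Real.log (∫ x, Real.exp (c * (f x - m)) ∂P) ≤ Real.log (Real.exp (c * a)) :=
          Real.log_le_log (hMpos c hc) hle
      _ = c * a := Real.log_exp _
  -- lower bound on H
  have hHlow : ∀ δ : ℝ, 0 < δ → ∃ p : ℝ, 0 < p ∧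
      ∀ c : ℝ, 0 < c → c * (a - δ) + Real.log p ≤ H c := by
    intro δ hδ
    set A := {x | fplus - δ < f x} with hAdef
    have hA : MeasurableSet A := measurableSet_lt measurable_const hf
    have hPA : P A ≠ 0 := by
      intro h0
      have hae : ∀ᵐ x ∂P, f x ≤ fplus - δ := by
        rw [ae_iff]
        convert h0 using 2
        ext x; simp [hAdef, not_le]
      linarith [hlub _ hae]
    have hp : 0 < (P A).toReal := ENNReal.toReal_pos hPA (measure_ne_top P A)
    refine ⟨(P A).toReal, hp, fun c hc => ?_⟩
    have h1 : Real.exp (c * (a - δ)) * (P A).toReal ≤ ∫ x in A, Real.exp (c * (f x - m)) ∂P := by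
      refine setIntegral_ge_of_const_le_real hA (measure_ne_top P A) (fun x hx => ?_)
        ((hint' c hc).integrableOn)
      have hx' : fplus - δ < f x := hx
      refine Real.exp_le_exp.2 ?_
      have : a - δ ≤ f x - m := by rw [hadef]; linarith
      nlinarith
    have h2 : ∫ x in A, Real.exp (c * (f x - m)) ∂P ≤ ∫ x, Real.exp (c * (f x - m)) ∂P :=
      setIntegral_le_integral (hint' c hc)
        (Filter.Eventually.of_forall fun x => (Real.exp_pos _).le)
    calc c * (a - δ) + Real.log (P A).toReal
        = Real.log (Real.exp (c * (a - δ)) * (P A).toReal) := by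
          rw [Real.log_mul (Real.exp_ne_zero _) hp.ne', Real.log_exp]
      _ ≤ Real.log (∫ x, Real.exp (c * (f x - m)) ∂P) :=
          Real.log_le_log (by positivity) (h1.trans h2)
      _ = H c := (hH' c).symm
  -- H c / c → a
  have hHdiv : Tendsto (fun c => H c / c) atTop (nhds a) := by
    rw [Metric.tendsto_atTop]
    intro ε hε
    obtain ⟨p, hp, hlow⟩ := hHlow (ε / 2) (by positivity)
    refine ⟨max 1 ((|Real.log p| + 1) * (2 / ε)), fun c hc => ?_⟩
    have hc1 : (1 : ℝ) ≤ c := le_trans (le_max_left _ _) hc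
    have hc0 : 0 < c := lt_of_lt_of_le one_pos hc1
    have h1 : H c / c ≤ a := by
      rw [div_le_iff₀ hc0]
      calc H c ≤ c * a := hHle c hc0
        _ = a * c := mul_comm _ _
    have hε' : -(ε / 2) < Real.log p / c := by
      rw [lt_div_iff₀ hc0]
      have hcε : (|Real.log p| + 1) * (2 / ε) ≤ c := le_trans (le_max_right _ _) hc
      have h3 : -Real.log p ≤ |Real.log p| := neg_le_abs _
      have hkey : (|Real.log p| + 1) * 2 ≤ c * ε := by
        have h4 := mul_le_mul_of_nonneg_right hcε hε.le
        rwa [mul_assoc, div_mul_cancel₀ _ hε.ne'] at h4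
      linarith
    have hfrac : (c * (a - ε / 2) + Real.log p) / c ≤ H c / c := by
      gcongr
      exact hlow c hc0
    rw [add_div, mul_div_cancel_left₀ _ hc0.ne'] at hfrac
    rw [Real.dist_eq, abs_lt]
    constructor
    · linarith
    · linarith
  -- deriv H → a
  have hDtends : Tendsto (deriv H) atTop (nhds a) := by
    have h1 : Tendsto (fun c => (c * deriv H c - H c) / c + H c / c) atTop (nhds (0 + a)) :=
      (hM.div_atTop tendsto_id).add hHdiv
    rw [zero_add] at h1
    refine h1.congr' ?_
    filter_upwards [eventually_gt_atTop (0:ℝ)] with c hc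
    field_simp; ring
  -- Step C : c * a - H c ≤ Mplus
  have hCa : ∀ c : ℝ, 0 < c → c * a - H c ≤ Mplus := by
    intro c hc
    have key : ∀ᶠ c' in atTop,
        c * a - H c ≤ c * (a - deriv H c') + (c' * deriv H c' - H c') := by
      filter_upwards [eventually_gt_atTop c] with c' hcc'
      have hc' : 0 < c' := hc.trans hcc'
      have htan := aux_tangent hgmeas hgub hc hcc' (hint' c hc) (hint' c' hc') (hDint c' hc')
      rw [← hH' c, ← hH' c', ← hderivH c' hc'] at htan
      nlinarith [htan]
    have hlim : Tendsto (fun c' => c * (a - deriv H c') + (c' * deriv H c' - H c'))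
        atTop (nhds (c * (a - a) + Mplus)) :=
      ((tendsto_const_nhds.sub hDtends).const_mul c).add hM
    have := ge_of_tendsto hlim key
    simpa using this
  -- membership of tilted measures in the set of part 2
  have hmemT : ∀ c : ℝ, 0 < c → c * deriv H c - H c ≤ η ^ 2 →
      deriv H c ∈ {y : ℝ | ∃ Q : Measure α, IsProbabilityMeasure Q ∧ Q ≪ P ∧
        Integrable f Q ∧
        Integrable (fun x => Real.log ((Q.rnDeriv P x).toReal)) Q ∧
        klDiv Q P ≤ η^2 ∧ y = (∫ x, f x ∂Q) - m} := by
    intro c hc hkl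
    set Q := P.tilted (fun x => c * (f x - m)) with hQdef
    have hprob : IsProbabilityMeasure Q := isProbabilityMeasure_tilted (hint' c hc)
    have habs : Q ≪ P := tilted_absolutelyContinuous P _
    have hgQ : Integrable (fun x => f x - m) Q :=
      aux_int_tilted hgmeas (hint' c hc) _ (hDint c hc)
    have hfQ : Integrable f Q := by
      refine (hgQ.add (integrable_const m)).congr (Filter.Eventually.of_forall fun x => ?_)
      simp
    have hIg : ∫ x, (f x - m) ∂Q = deriv H c := by
      rw [hQdef, aux_integral_g_tilted, hderivH c hc]
    have hIf : ∫ x, f x ∂Q = deriv H c + m := by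
      have h0 : ∫ x, f x ∂Q = ∫ x, ((f x - m) + m) ∂Q := by
        refine integral_congr_ae (Filter.Eventually.of_forall fun x => ?_); simp
      rw [h0, integral_add hgQ (integrable_const m), hIg, integral_const]
      simp
    have hlog_ae : (fun x => Real.log ((Q.rnDeriv P x).toReal)) =ᵐ[Q]
        fun x => c * (f x - m) - Real.log (∫ x, Real.exp (c * (f x - m)) ∂P) :=
      habs.ae_le (log_rnDeriv_tilted_left_self (hint' c hc))
    have hlogQint : Integrable (fun x => Real.log ((Q.rnDeriv P x).toReal)) Q :=
      ((hgQ.const_mul c).sub (integrable_const _)).congr hlog_ae.symm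
    have hklQ : klDiv Q P = c * deriv H c - H c := by
      unfold klDiv
      rw [integral_congr_ae hlog_ae,
        integral_sub (hgQ.const_mul c) (integrable_const _),
        integral_const_mul, hIg, integral_const]
      simp [hH' c]
    exact ⟨Q, hprob, habs, hfQ, hlogQint, by rw [hklQ]; exact hkl, by rw [hIf]; ring⟩
  -- assemble
  constructor
  · -- part 1
    have hlb : ∀ y ∈ {y : ℝ | ∃ c : ℝ, 0 < c ∧ y = (1/c) * (H c + η^2)}, a ≤ y := by
      rintro y ⟨c, hc, rfl⟩
      have h1 : c * a ≤ H c + η ^ 2 := by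
        have := hCa c hc; linarith
      have h2 : (1/c) * (c * a) ≤ (1/c) * (H c + η^2) :=
        mul_le_mul_of_nonneg_left h1 (by positivity)
      calc a = (1/c) * (c * a) := by field_simp
        _ ≤ _ := h2
    have hnonempty : Set.Nonempty {y : ℝ | ∃ c : ℝ, 0 < c ∧ y = (1/c) * (H c + η^2)} :=
      ⟨(1/1) * (H 1 + η^2), 1, one_pos, rfl⟩
    refine le_antisymm ?_ (le_csInf hnonempty hlb)
    have hbdd : BddBelow {y : ℝ | ∃ c : ℝ, 0 < c ∧ y = (1/c) * (H c + η^2)} := ⟨a, hlb⟩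
    refine le_of_forall_pos_le_add fun ε hε => ?_
    set c := max 1 (η^2/ε) with hcdef
    have hc : 0 < c := lt_of_lt_of_le one_pos (le_max_left _ _)
    have hmem : (1/c) * (H c + η^2) ∈ {y : ℝ | ∃ c : ℝ, 0 < c ∧ y = (1/c) * (H c + η^2)} :=
      ⟨c, hc, rfl⟩
    have hstep : (1/c) * (H c + η^2) ≤ a + ε := by
      have h1 := hHle c hc
      have h2 : η^2 ≤ ε * c := by
        have h3 : η^2/ε ≤ c := le_trans (le_max_right _ _) (le_of_eq hcdef.symm)
        rw [div_le_iff₀ hε] at h3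
        linarith
      have h4 : (1/c) * (H c + η^2) ≤ (1/c) * (c * a + ε * c) :=
        mul_le_mul_of_nonneg_left (by linarith) (by positivity)
      calc (1/c) * (H c + η^2) ≤ (1/c) * (c * a + ε * c) := h4
        _ = a + ε := by field_simp
    exact (csInf_le hbdd hmem).trans hstep
  · -- part 2
    constructor
    · rintro y ⟨Q, hQprob, hQP, hfQ, hlogQ, hklQ, rfl⟩
      have hle : ∫ x, f x ∂Q ≤ fplus := by
        have h := integral_mono_ae hfQ (integrable_const fplus) (hQP.ae_le hub)
        simpa using h
      rw [hadef]
      linarith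
    · intro b hb
      have hev : ∀ᶠ c in atTop, deriv H c ≤ b := by
        have h1 : ∀ᶠ c in atTop, c * deriv H c - H c < η ^ 2 :=
          hM.eventually_lt_const hη
        filter_upwards [h1, eventually_gt_atTop (0:ℝ)] with c hc1 hc0
        exact hb (hmemT c hc0 hc1.le)
      exact le_of_tendsto hDtends hev
end
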